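/- arXiv:2508.06298 — 4 statements merged into one kernel-verified Lean document; each statement's English description precedes it below -/
import Mathlib

section
/- Let μ_sc be the semicircular law, the probability measure on ℝ with density f(x) = (1/(2π))√(4 − x²) on [−2, 2] and zero elsewhere. For every real z > 2, the Stieltjes transform satisfies ∫ 1/(x − z) dμ_sc(x) = (−z + √(z² − 4))/2. -/
open MeasureTheory Real

/-- The semicircular law: the probability measure on `ℝ` with density
`(1/(2π))√(4 − x²)` on `[−2, 2]` and `0` elsewhere. -/
noncomputable def semicircleLaw : Measure ℝ :=
  volume.withDensity (fun x : ℝ =>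
    ENNReal.ofReal (if |x| ≤ 2 then Real.sqrt (4 - x ^ 2) / (2 * π) else 0))

open scoped NNReal ENNReal

noncomputable def scF (z x : ℝ) : ℝ :=
  Real.sqrt (4 - x ^ 2) - z * Real.arcsin (x / 2)
    - Real.sqrt (z ^ 2 - 4) * Real.arcsin ((4 - z * x) / (2 * (z - x)))

lemma scF_hasDerivAt (z : ℝ) (hz : 2 < z) {x : ℝ} (hx1 : -2 < x) (hx2 : x < 2) :
    HasDerivAt (scF z) (Real.sqrt (4 - x ^ 2) / (x - z)) x := by
  have h4 : (0:ℝ) < 4 - x ^ 2 := by nlinarith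
  have hq : 0 < Real.sqrt (4 - x ^ 2) := Real.sqrt_pos.2 h4
  set q := Real.sqrt (4 - x ^ 2) with hqdef
  have hq2 : q ^ 2 = 4 - x ^ 2 := Real.sq_sqrt h4.le
  have hzx : 0 < z - x := by linarith
  have hz4 : (0:ℝ) < z ^ 2 - 4 := by nlinarith
  have hs : 0 < Real.sqrt (z ^ 2 - 4) := Real.sqrt_pos.2 hz4
  set s := Real.sqrt (z ^ 2 - 4) with hsdef
  have hs2 : s ^ 2 = z ^ 2 - 4 := Real.sq_sqrt hz4.le
  -- part 1 : sqrt (4 - y^2)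
  have h1 : HasDerivAt (fun y : ℝ => Real.sqrt (4 - y ^ 2)) (-x / q) x := by
    have hpoly : HasDerivAt (fun y : ℝ => 4 - y ^ 2) (-(2 * x)) x := by
      simpa using ((hasDerivAt_pow 2 x).const_sub 4)
    have := (Real.hasDerivAt_sqrt h4.ne').comp x hpoly
    refine this.congr_deriv ?_
    rw [← hqdef]
    field_simp
  -- part 2 : arcsin (y/2)
  have hhalf : Real.sqrt (1 - (x / 2) ^ 2) = q / 2 := by
    have : 1 - (x / 2) ^ 2 = (q / 2) ^ 2 := by
      rw [div_pow, div_pow, hq2]; ring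
    rw [this, Real.sqrt_sq (by positivity)]
  have h2 : HasDerivAt (fun y : ℝ => Real.arcsin (y / 2)) (1 / q) x := by
    have hin : HasDerivAt (fun y : ℝ => y / 2) (1 / 2) x := by
      simpa using (hasDerivAt_id x).div_const 2
    have harc : HasDerivAt Real.arcsin (1 / Real.sqrt (1 - (x / 2) ^ 2)) (x / 2) :=
      Real.hasDerivAt_arcsin (by nlinarith) (by nlinarith)
    have := harc.comp x hin
    refine this.congr_deriv ?_
    rw [hhalf]
    field_simp
  -- part 3 : arcsin (u y)
  set u : ℝ → ℝ := fun y => (4 - z * y) / (2 * (z - y)) with hudef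
  have hden : (2 * (z - x)) ≠ 0 := by positivity
  have hu : HasDerivAt u ((4 - z ^ 2) / (2 * (z - x) ^ 2)) x := by
    have hnum : HasDerivAt (fun y : ℝ => 4 - z * y) (-z) x := by
      simpa using ((hasDerivAt_id x).const_mul z).const_sub 4
    have hd : HasDerivAt (fun y : ℝ => 2 * (z - y)) (-2) x := by
      have : HasDerivAt (fun y : ℝ => z - y) (-1) x := by
        simpa using (hasDerivAt_id x).const_sub z
      simpa using this.const_mul 2
    have := hnum.div hd hden
    refine this.congr_deriv ?_
    field_simp
    ring
  have husq : 1 - (u x) ^ 2 = (s * q / (2 * (z - x))) ^ 2 := by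
    have hsq : (s * q) ^ 2 = (z ^ 2 - 4) * (4 - x ^ 2) := by
      rw [mul_pow, hs2, hq2]
    have hux : u x = (4 - z * x) / (2 * (z - x)) := rfl
    rw [hux]
    field_simp
    linear_combination -hsq
  have hupos : 0 < 1 - (u x) ^ 2 := by rw [husq]; positivity
  have hune1 : u x ≠ 1 := by intro h; rw [h] at hupos; norm_num at hupos
  have hune1' : u x ≠ -1 := by intro h; rw [h] at hupos; norm_num at hupos
  have hsqrtu : Real.sqrt (1 - (u x) ^ 2) = s * q / (2 * (z - x)) := by
    rw [husq, Real.sqrt_sq (by positivity)]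
  have h3 : HasDerivAt (fun y => Real.arcsin (u y))
      ((1 / (s * q / (2 * (z - x)))) * ((4 - z ^ 2) / (2 * (z - x) ^ 2))) x := by
    have harc : HasDerivAt Real.arcsin (1 / Real.sqrt (1 - (u x) ^ 2)) (u x) :=
      Real.hasDerivAt_arcsin hune1' hune1
    have := harc.comp x hu
    rw [hsqrtu] at this
    exact this
  have hcomb := (h1.sub (h2.const_mul z)).sub (h3.const_mul s)
  have : scF z = fun y => Real.sqrt (4 - y ^ 2) - z * Real.arcsin (y / 2)
      - s * Real.arcsin (u y) := by
    funext y; rw [scF, hudef, hsdef]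
  rw [this]
  refine hcomb.congr_deriv ?_
  have hxz : x - z ≠ 0 := by intro h; linarith
  field_simp
  linear_combination (x - z) * hq2

lemma scF_continuousOn (z : ℝ) (hz : 2 < z) :
    ContinuousOn (scF z) (Set.Icc (-2) 2) := by
  unfold scF
  apply ContinuousOn.sub
  apply ContinuousOn.sub
  · exact (Real.continuous_sqrt.comp (by continuity)).continuousOn
  · exact (continuous_const.mul (Real.continuous_arcsin.comp (by continuity))).continuousOn
  · apply ContinuousOn.mul continuousOn_const
    apply Real.continuous_arcsin.comp_continuousOn
    apply ContinuousOn.div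
    · exact (by continuity : Continuous fun y : ℝ => 4 - z * y).continuousOn
    · exact (by continuity : Continuous fun y : ℝ => 2 * (z - y)).continuousOn
    · intro y hy
      have : y ≤ 2 := hy.2
      have : 0 < z - y := by linarith
      positivity

lemma sc_key_integral (z : ℝ) (hz : 2 < z) :
    ∫ x in (-2:ℝ)..2, Real.sqrt (4 - x ^ 2) / (x - z)
      = π * (-z + Real.sqrt (z ^ 2 - 4)) := by
  have hint : IntervalIntegrable (fun x => Real.sqrt (4 - x ^ 2) / (x - z)) volume (-2) 2 := by
    apply ContinuousOn.intervalIntegrable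
    apply ContinuousOn.div
    · exact (Real.continuous_sqrt.comp (by continuity)).continuousOn
    · exact (continuous_id.sub continuous_const).continuousOn
    · intro y hy
      rw [Set.uIcc_of_le (by norm_num)] at hy
      have : y ≤ 2 := hy.2
      intro h; linarith [sub_eq_zero.mp h]
  rw [intervalIntegral.integral_eq_sub_of_hasDerivAt_of_le (by norm_num)
    (scF_continuousOn z hz) (fun x hx => scF_hasDerivAt z hz hx.1 hx.2) hint]
  have h2 : (4 : ℝ) - (2:ℝ) ^ 2 = 0 := by norm_num
  have h2' : (4 : ℝ) - (-2:ℝ) ^ 2 = 0 := by norm_num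
  have hz2 : (0:ℝ) < z - 2 := by linarith
  have hz2' : (0:ℝ) < z + 2 := by linarith
  have e1 : (4 - z * 2) / (2 * (z - 2)) = -1 := by
    rw [div_eq_iff (by positivity)]; ring
  have e2 : (4 - z * (-2)) / (2 * (z - (-2))) = 1 := by
    have : z - (-2) = z + 2 := by ring
    rw [this, div_eq_iff (by positivity)]; ring
  rw [scF, scF, h2, h2', e1, e2]
  norm_num [Real.arcsin_one, Real.arcsin_neg_one]
  ring


/-- **Stieltjes transform of the semicircular law.**  For every real `z > 2`,
`∫ 1/(x − z) dμ_sc(x) = (−z + √(z² − 4))/2`. -/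
theorem stieltjes_transform_semicircle (z : ℝ) (hz : 2 < z) :
    ∫ x, 1 / (x - z) ∂semicircleLaw = (-z + Real.sqrt (z ^ 2 - 4)) / 2 := by
  set g : ℝ → ℝ := fun x => if |x| ≤ 2 then Real.sqrt (4 - x ^ 2) / (2 * π) else 0 with hg
  have hg_ind : g = Set.indicator (Set.Icc (-2) 2)
      (fun x => Real.sqrt (4 - x ^ 2) / (2 * π)) := by
    funext x
    rw [Set.indicator_apply, hg]
    simp [abs_le, Set.mem_Icc]
  have hg_meas : Measurable g := by
    rw [hg_ind]
    exact (Measurable.indicator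
      ((Real.continuous_sqrt.comp (by continuity)).measurable.div_const _) measurableSet_Icc)
  have hg_nonneg : ∀ x, 0 ≤ g x := by
    intro x
    simp only [hg]
    split
    · positivity
    · exact le_rfl
  have step1 : ∫ x, 1 / (x - z) ∂semicircleLaw = ∫ x, g x * (1 / (x - z)) := by
    have hco : semicircleLaw
        = volume.withDensity fun x => ((Real.toNNReal (g x) : ℝ≥0) : ℝ≥0∞) := by
      rw [semicircleLaw]; rfl
    rw [hco,
      integral_withDensity_eq_integral_smul
        (show Measurable fun x => Real.toNNReal (g x) from
          measurable_real_toNNReal.comp hg_meas)]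
    congr 1
    funext x
    rw [NNReal.smul_def, Real.coe_toNNReal _ (hg_nonneg x), smul_eq_mul]
  have step2 : ∫ x, g x * (1 / (x - z))
      = ∫ x in (-2:ℝ)..2, Real.sqrt (4 - x ^ 2) / (2 * π) * (1 / (x - z)) := by
    rw [hg_ind]
    have : (fun x => (Set.Icc (-2:ℝ) 2).indicator
          (fun x => Real.sqrt (4 - x ^ 2) / (2 * π)) x * (1 / (x - z)))
        = Set.indicator (Set.Icc (-2) 2)
          (fun x => Real.sqrt (4 - x ^ 2) / (2 * π) * (1 / (x - z))) := by
      funext x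
      by_cases hx : x ∈ Set.Icc (-2:ℝ) 2 <;>
        simp [Set.indicator_apply, hx]
    rw [this, integral_indicator measurableSet_Icc,
      MeasureTheory.integral_Icc_eq_integral_Ioc,
      ← intervalIntegral.integral_of_le (by norm_num : (-2:ℝ) ≤ 2)]
  have step3 : ∫ x in (-2:ℝ)..2, Real.sqrt (4 - x ^ 2) / (2 * π) * (1 / (x - z))
      = (1 / (2 * π)) * ∫ x in (-2:ℝ)..2, Real.sqrt (4 - x ^ 2) / (x - z) := by
    rw [← intervalIntegral.integral_const_mul]
    congr 1
    funext x
    field_simp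
  rw [step1, step2, step3, sc_key_integral z hz]
  have hpi : π ≠ 0 := Real.pi_ne_zero
  field_simp
end

section
/- Let μ_sc be the semicircular law, the probability measure on ℝ with density f(x) = (1/(2π))√(4 − x²) on [−2, 2] and zero elsewhere. For every real z ≥ 2, ∫_{−2}^{2} log(z − x) dμ_sc(x) = (1/4) z (z − √(z² − 4)) + log(z + √(z² − 4)) − log 2 − 1/2. -/
open MeasureTheory Real

open Set
open scoped ENNReal NNReal

noncomputable def V (x : ℝ) : ℝ := x * Real.sqrt (4 - x^2) / 2 + 2 * Real.arcsin (x/2)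

lemma sqrt_quarter {x : ℝ} : Real.sqrt (1 - (x/2)^2) = Real.sqrt (4 - x^2) / 2 := by
  rw [show (1 : ℝ) - (x/2)^2 = (4 - x^2)/2^2 by ring, Real.sqrt_div' _ (by norm_num),
    Real.sqrt_sq (by norm_num : (0:ℝ) ≤ 2)]


lemma V_deriv {x : ℝ} (hx : x ∈ Ioo (-2:ℝ) 2) :
    HasDerivAt V (Real.sqrt (4 - x^2)) x := by
  obtain ⟨h1, h2⟩ := hx
  have hpos : 0 < 4 - x^2 := by nlinarith
  have hs : 0 < Real.sqrt (4 - x^2) := Real.sqrt_pos.2 hpos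
  have hsq : Real.sqrt (4 - x^2) ^ 2 = 4 - x^2 := Real.sq_sqrt hpos.le
  have d1 : HasDerivAt (fun x : ℝ => 4 - x^2) (-(2*x)) x := by
    simpa using ((hasDerivAt_pow 2 x).const_sub 4)
  have dsqrt : HasDerivAt (fun x : ℝ => Real.sqrt (4 - x^2)) (1 / (2 * Real.sqrt (4 - x^2)) * -(2*x)) x :=
    (Real.hasDerivAt_sqrt hpos.ne').comp x d1
  have darcsin : HasDerivAt (fun x : ℝ => Real.arcsin (x/2)) (1 / Real.sqrt (1 - (x/2)^2) * (1/2)) x := by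
    have h₁ : x/2 ≠ -1 := by intro h; nlinarith [h]
    have h₂ : x/2 ≠ 1 := by intro h; nlinarith [h]
    exact (Real.hasDerivAt_arcsin h₁ h₂).comp x ((hasDerivAt_id x).div_const 2)
  rw [sqrt_quarter] at darcsin
  have := (((hasDerivAt_id x).mul dsqrt).div_const 2).add (darcsin.const_mul 2)
  refine this.congr_deriv (Eq.symm ?_)
  field_simp
  simp only [id_eq]
  nlinarith [hsq]

lemma V_cont : ContinuousOn V (Icc (-2:ℝ) 2) := by
  apply Continuous.continuousOn
  unfold V
  have : Continuous (fun x : ℝ => Real.arcsin (x/2)) :=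
    Real.continuous_arcsin.comp (continuous_id.div_const 2)
  continuity

lemma sqrt_cont : Continuous (fun x : ℝ => Real.sqrt (4 - x^2)) := by fun_prop

lemma mass : ∫ x in (-2:ℝ)..2, Real.sqrt (4 - x^2) = 2 * π := by
  have h := intervalIntegral.integral_eq_sub_of_hasDeriv_right_of_le (by norm_num : (-2:ℝ) ≤ 2)
    V_cont (fun x hx => (V_deriv hx).hasDerivWithinAt)
    (sqrt_cont.intervalIntegrable _ _)
  rw [h]
  simp [V, show ((-2:ℝ))/2 = -1 by norm_num, show ((2:ℝ))/2 = 1 by norm_num,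
    Real.arcsin_one, Real.arcsin_neg, show (4:ℝ) - 2^2 = 0 by norm_num,
    show (4:ℝ) - (-2)^2 = 0 by norm_num]
  ring

noncomputable def H (z x : ℝ) : ℝ :=
  z * Real.arcsin (x/2) - Real.sqrt (4 - x^2)
    + Real.sqrt (z^2 - 4) * Real.arcsin ((4 - z*x)/(2*(z-x)))

lemma sqrt_quarter' {x : ℝ} : Real.sqrt (1 - (x/2)^2) = Real.sqrt (4 - x^2) / 2 := by
  rw [show (1 : ℝ) - (x/2)^2 = (4 - x^2)/2^2 by ring, Real.sqrt_div' _ (by norm_num),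
    Real.sqrt_sq (by norm_num : (0:ℝ) ≤ 2)]

lemma H_cont {z : ℝ} (hz : 2 < z) : ContinuousOn (H z) (Icc (-2:ℝ) 2) := by
  have harcsin : Continuous (fun x : ℝ => Real.arcsin (x/2)) :=
    Real.continuous_arcsin.comp (continuous_id.div_const 2)
  apply ContinuousOn.add
  apply ContinuousOn.sub
  · exact (harcsin.comp continuous_id).continuousOn.const_smul z
  · exact (Real.continuous_sqrt.comp (by fun_prop)).continuousOn
  · apply ContinuousOn.mul continuousOn_const
    apply Real.continuous_arcsin.comp_continuousOn
    apply ContinuousOn.div (by fun_prop) (by fun_prop)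
    intro x hx
    have := hx.2
    intro h
    have hzx : z - x ≠ 0 := by intro h'; simp at hx; linarith [hx.2]
    rcases mul_eq_zero.1 h with h' | h'
    · norm_num at h'
    · exact hzx h'

lemma H_deriv {z x : ℝ} (hz : 2 < z) (hx : x ∈ Ioo (-2:ℝ) 2) :
    HasDerivAt (H z) (Real.sqrt (4 - x^2) / (z - x)) x := by
  obtain ⟨h1, h2⟩ := hx
  have hzx : 0 < z - x := by linarith
  have hpos : 0 < 4 - x^2 := by nlinarith
  have hw2 : 0 < z^2 - 4 := by nlinarith
  set s := Real.sqrt (4 - x^2) with hs_def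
  set w := Real.sqrt (z^2 - 4) with hw_def
  have hs : 0 < s := Real.sqrt_pos.2 hpos
  have hw : 0 < w := Real.sqrt_pos.2 hw2
  have hsq : s ^ 2 = 4 - x^2 := Real.sq_sqrt hpos.le
  have hwq : w ^ 2 = z^2 - 4 := Real.sq_sqrt hw2.le
  set u := (4 - z*x)/(2*(z-x)) with hu_def
  have h1u : 1 - u^2 = (w * s / (2*(z-x)))^2 := by
    rw [hu_def]
    field_simp
    nlinarith [hsq, hwq]
  have hsu : Real.sqrt (1 - u^2) = w * s / (2*(z-x)) := by
    rw [h1u, Real.sqrt_sq (by positivity)]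
  have h1u' : (0:ℝ) < 1 - u^2 := by rw [h1u]; positivity
  -- derivative of u
  have du : HasDerivAt (fun x : ℝ => (4 - z*x)/(2*(z-x))) ((4 - z^2)/(2*(z-x)^2)) x := by
    have hn : HasDerivAt (fun x : ℝ => 4 - z*x) (-z) x := by
      simpa using ((hasDerivAt_id x).const_mul z).const_sub 4
    have hd : HasDerivAt (fun x : ℝ => 2*(z-x)) (-2) x := by
      simpa using ((hasDerivAt_id x).const_sub z).const_mul 2
    have := hn.div hd (by positivity)
    refine this.congr_deriv (Eq.symm ?_)
    field_simp
    ring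
  have darc : HasDerivAt (fun x : ℝ => Real.arcsin ((4 - z*x)/(2*(z-x))))
      (1 / Real.sqrt (1 - u^2) * ((4 - z^2)/(2*(z-x)^2))) x := by
    have hu1 : u ≠ -1 := by intro h; rw [h] at h1u'; norm_num at h1u'
    have hu2 : u ≠ 1 := by intro h; rw [h] at h1u'; norm_num at h1u'
    exact (Real.hasDerivAt_arcsin hu1 hu2).comp x du
  have darc2 : HasDerivAt (fun x : ℝ => Real.arcsin (x/2)) (1/s * (1/2) * 2) x := by
    have h₁ : x/2 ≠ -1 := by intro h; nlinarith [h]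
    have h₂ : x/2 ≠ 1 := by intro h; nlinarith [h]
    have := (Real.hasDerivAt_arcsin h₁ h₂).comp x ((hasDerivAt_id x).div_const 2)
    rw [sqrt_quarter'] at this
    refine this.congr_deriv (Eq.symm ?_)
    rw [← hs_def]
    field_simp
  have d1 : HasDerivAt (fun x : ℝ => 4 - x^2) (-(2*x)) x := by
    simpa using ((hasDerivAt_pow 2 x).const_sub 4)
  have dsqrt : HasDerivAt (fun x : ℝ => Real.sqrt (4 - x^2)) (1 / (2 * s) * -(2*x)) x :=
    (Real.hasDerivAt_sqrt hpos.ne').comp x d1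
  have total := ((darc2.const_mul z).sub dsqrt).add (darc.const_mul w)
  refine total.congr_deriv (Eq.symm ?_)
  rw [hsu]
  field_simp
  linear_combination hsq

lemma stieltjes {z : ℝ} (hz : 2 < z) :
    ∫ x in (-2:ℝ)..2, Real.sqrt (4 - x^2) / (z - x) = π * (z - Real.sqrt (z^2 - 4)) := by
  have hcont : ContinuousOn (fun x : ℝ => Real.sqrt (4 - x^2) / (z - x)) (uIcc (-2:ℝ) 2) := by
    apply ContinuousOn.div ((Real.continuous_sqrt.comp (by fun_prop)).continuousOn) (by fun_prop)
    intro x hx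
    rw [uIcc_of_le (by norm_num)] at hx
    have := hx.2
    intro h; linarith [sub_eq_zero.1 h]
  have h := intervalIntegral.integral_eq_sub_of_hasDeriv_right_of_le (by norm_num : (-2:ℝ) ≤ 2)
    (H_cont hz) (fun x hx => (H_deriv hz hx).hasDerivWithinAt)
    (hcont.intervalIntegrable)
  rw [h, H, H]
  have e2 : ((4:ℝ) - z*2)/(2*(z-2)) = -1 := by
    rw [div_eq_iff (by intro h; nlinarith [mul_eq_zero.1 h])]; ring
  have e2' : ((4:ℝ) - z*(-2))/(2*(z-(-2))) = 1 := by
    rw [div_eq_iff (by intro h; nlinarith [mul_eq_zero.1 h])]; ring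
  rw [e2, e2']
  simp [show ((2:ℝ))/2 = 1 by norm_num, show ((-2:ℝ))/2 = -1 by norm_num,
    Real.arcsin_one, Real.arcsin_neg, show (4:ℝ) - 2^2 = 0 by norm_num,
    show (4:ℝ) - (-2:ℝ)^2 = 0 by norm_num]
  ring

-- √t * |log t| ≤ 4 for 0 < t ≤ 1; for 1 ≤ t ≤ 5 : √t log t ≤ 3*4
lemma key_bound {t : ℝ} (ht : 0 < t) (ht5 : t ≤ 5) :
    Real.sqrt t * |Real.log t| ≤ 12 := by
  have hst : 0 < Real.sqrt t := Real.sqrt_pos.2 ht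
  rcases le_or_gt t 1 with h | h
  · have hlog : Real.log t ≤ 0 := Real.log_nonpos ht.le h
    rw [abs_of_nonpos hlog]
    have h1 : Real.log (Real.sqrt t) = Real.log t / 2 := Real.log_sqrt ht.le
    have h2 : Real.log (Real.sqrt t)⁻¹ ≤ (Real.sqrt t)⁻¹ - 1 :=
      Real.log_le_sub_one_of_pos (by positivity)
    rw [Real.log_inv, h1] at h2
    -- -log t / 2 ≤ 1/√t - 1  ⇒ √t * (-log t) ≤ 2 - 2√t ≤ 2
    have h3 : Real.sqrt t * (-Real.log t) ≤ 2 * (1 - Real.sqrt t) := by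
      have := mul_le_mul_of_nonneg_left h2 hst.le
      rw [mul_sub, mul_inv_cancel₀ hst.ne'] at this
      nlinarith
    nlinarith [hst.le, Real.sqrt_nonneg t]
  · have hlog : 0 ≤ Real.log t := Real.log_nonneg h.le
    rw [abs_of_nonneg hlog]
    have h1 : Real.log t ≤ t - 1 := Real.log_le_sub_one_of_pos ht
    have h2 : Real.sqrt t ≤ 3 := by
      rw [show (3:ℝ) = Real.sqrt 9 by rw [show (9:ℝ) = 3^2 by norm_num, Real.sqrt_sq]; norm_num]
      exact Real.sqrt_le_sqrt (by linarith)
    nlinarith [Real.sqrt_nonneg t]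

lemma unif_bound {z x : ℝ} (h2z : 2 ≤ z) (hz3 : z ≤ 3) (hx1 : -2 ≤ x) (hx2 : x ≤ 2) :
    |Real.log (z - x) * Real.sqrt (4 - x^2)| ≤ 24 := by
  rcases eq_or_lt_of_le (by linarith : x ≤ z) with he | hlt
  · rw [← he]
    simp
  have ht : 0 < z - x := by linarith
  have ht5 : z - x ≤ 5 := by linarith
  have hs : Real.sqrt (4 - x^2) ≤ 2 * Real.sqrt (z - x) := by
    rw [show 2 * Real.sqrt (z-x) = Real.sqrt (4 * (z-x)) by
      rw [Real.sqrt_mul (by norm_num), show Real.sqrt 4 = 2 by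
        rw [show (4:ℝ) = 2^2 by norm_num, Real.sqrt_sq]; norm_num]]
    exact Real.sqrt_le_sqrt (by nlinarith)
  rw [abs_mul, abs_of_nonneg (Real.sqrt_nonneg _)]
  calc |Real.log (z-x)| * Real.sqrt (4 - x^2)
      ≤ |Real.log (z-x)| * (2 * Real.sqrt (z-x)) := by
        exact mul_le_mul_of_nonneg_left hs (abs_nonneg _)
    _ = 2 * (Real.sqrt (z-x) * |Real.log (z-x)|) := by ring
    _ ≤ 2 * 12 := by linarith [key_bound ht ht5]
    _ = 24 := by norm_num

noncomputable def Phi (z : ℝ) : ℝ :=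
  ∫ x in Set.Ioc (-2:ℝ) 2, Real.log (z - x) * (Real.sqrt (4 - x^2) / (2*π))

noncomputable def Psi (z : ℝ) : ℝ :=
  (1 / 4) * z * (z - Real.sqrt (z ^ 2 - 4)) + Real.log (z + Real.sqrt (z ^ 2 - 4))
    - Real.log 2 - 1 / 2

lemma dens_meas : Measurable (fun x : ℝ => if |x| ≤ 2 then Real.sqrt (4 - x ^ 2) / (2 * π) else 0) := by
  apply Measurable.ite
  · exact measurableSet_le (by fun_prop) measurable_const
  · fun_prop
  · fun_prop

lemma reduction (z : ℝ) : ∫ x, Real.log (z - x) ∂semicircleLaw = Phi z := by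
  have hd : ∀ x : ℝ, 0 ≤ (if |x| ≤ 2 then Real.sqrt (4 - x ^ 2) / (2 * π) else 0) := by
    intro x
    split
    · positivity
    · exact le_refl _
  set d : ℝ → ℝ := fun x => if |x| ≤ 2 then Real.sqrt (4 - x ^ 2) / (2 * π) else 0 with hddef
  have key : ∫ x, Real.log (z - x) ∂semicircleLaw = ∫ x, d x * Real.log (z - x) := by
    have hm : Measurable (fun x => (d x).toNNReal) := dens_meas.real_toNNReal
    have : semicircleLaw = volume.withDensity (fun x => ((d x).toNNReal : ℝ≥0∞)) := by
      rfl
    rw [this, integral_withDensity_eq_integral_smul hm]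
    congr 1
    ext x
    rw [NNReal.smul_def, smul_eq_mul, Real.coe_toNNReal _ (hd x)]
  rw [key]
  have hsupp : ∀ x, x ∉ Set.Ioc (-2:ℝ) 2 → d x * Real.log (z - x) = 0 := by
    intro x hx
    by_cases h : |x| ≤ 2
    · have habs := abs_le.1 h
      simp only [Set.mem_Ioc, not_and, not_le] at hx
      have hx2 : x = -2 := by
        by_contra hne
        have : -2 < x := lt_of_le_of_ne habs.1 (Ne.symm hne)
        linarith [hx this, habs.2]
      have : Real.sqrt (4 - x^2) = 0 := by rw [hx2]; norm_num
      simp [hddef, h, this]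
    · simp [hddef, h]
  rw [← setIntegral_eq_integral_of_forall_compl_eq_zero hsupp, Phi]
  apply setIntegral_congr_fun measurableSet_Ioc
  intro x hx
  have h1 : |x| ≤ 2 := abs_le.2 ⟨hx.1.le, hx.2⟩
  simp only [hddef, if_pos h1]
  ring

lemma Psi_deriv {z : ℝ} (hz : 2 < z) :
    HasDerivAt Psi ((z - Real.sqrt (z^2 - 4)) / 2) z := by
  have hw2 : 0 < z^2 - 4 := by nlinarith
  set w := Real.sqrt (z^2 - 4) with hw_def
  have hw : 0 < w := Real.sqrt_pos.2 hw2
  have hwq : w ^ 2 = z^2 - 4 := Real.sq_sqrt hw2.le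
  have hzw : 0 < z + w := by linarith
  have dinner : HasDerivAt (fun z : ℝ => z^2 - 4) (2*z) z := by
    simpa using ((hasDerivAt_pow 2 z).sub_const 4)
  have dw : HasDerivAt (fun z : ℝ => Real.sqrt (z^2 - 4)) (1 / (2*w) * (2*z)) z :=
    (Real.hasDerivAt_sqrt hw2.ne').comp z dinner
  have d1 := ((hasDerivAt_id z).const_mul ((1:ℝ)/4)).mul ((hasDerivAt_id z).sub dw)
  have d2 : HasDerivAt (fun z : ℝ => Real.log (z + Real.sqrt (z^2-4)))
      ((z + w)⁻¹ * (1 + 1/(2*w)*(2*z))) z := by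
    exact (Real.hasDerivAt_log hzw.ne').comp z ((hasDerivAt_id z).add dw)
  have total := ((d1.add d2).sub_const (Real.log 2)).sub_const (1/2)
  refine total.congr_deriv (Eq.symm ?_)
  have hzzw : z + w ≠ 0 := hzw.ne'
  simp only [id_eq, mul_one, Pi.sub_apply]
  field_simp
  ring_nf
  rw [show (-4 + z^2 : ℝ) = z^2 - 4 by ring, ← hw_def]
  linear_combination (-2*w - 2*z) * hwq

lemma integrand_meas (z : ℝ) :
    AEStronglyMeasurable (fun x : ℝ => Real.log (z - x) * (Real.sqrt (4 - x^2) / (2*π)))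
      (volume.restrict (Set.Ioc (-2:ℝ) 2)) := by
  apply Measurable.aestronglyMeasurable
  exact (Real.measurable_log.comp (measurable_const.sub measurable_id)).mul (by fun_prop)

lemma cont_integrand {z : ℝ} (hz : 2 < z) :
    ContinuousOn (fun x : ℝ => Real.log (z - x) * (Real.sqrt (4 - x^2) / (2*π)))
      (Set.Icc (-2:ℝ) 2) := by
  apply ContinuousOn.mul
  · apply ContinuousOn.log (by fun_prop)
    intro x hx
    have := hx.2
    intro h; rw [sub_eq_zero] at h; linarith
  · exact ((Real.continuous_sqrt.comp (by fun_prop)).div_const _).continuousOn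

lemma integrable_integrand {z : ℝ} (hz : 2 < z) :
    IntegrableOn (fun x : ℝ => Real.log (z - x) * (Real.sqrt (4 - x^2) / (2*π)))
      (Set.Ioc (-2:ℝ) 2) volume :=
  ((cont_integrand hz).integrableOn_Icc).mono_set Set.Ioc_subset_Icc_self

lemma Phi_deriv {z : ℝ} (hz : 2 < z) :
    HasDerivAt Phi ((z - Real.sqrt (z^2 - 4)) / 2) z := by
  set ε := (z - 2) / 2 with hε
  have hεpos : 0 < ε := by rw [hε]; linarith
  have key := hasDerivAt_integral_of_dominated_loc_of_deriv_le (μ := volume.restrict (Set.Ioc (-2:ℝ) 2))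
    (F := fun z x => Real.log (z - x) * (Real.sqrt (4 - x^2) / (2*π)))
    (F' := fun z x => (z - x)⁻¹ * (Real.sqrt (4 - x^2) / (2*π)))
    (bound := fun x => ε⁻¹ * (Real.sqrt (4 - x^2) / (2*π)))
    (Metric.ball_mem_nhds z hεpos)
    (Filter.Eventually.of_forall fun z => integrand_meas z)
    (integrable_integrand hz)
    (by
      apply Measurable.aestronglyMeasurable
      exact ((measurable_const.sub measurable_id).inv).mul (by fun_prop))
    (by
      filter_upwards [ae_restrict_mem measurableSet_Ioc] with x hx
      intro y hy
      rw [Metric.mem_ball, Real.dist_eq, abs_lt] at hy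
      have hyx : ε ≤ y - x := by
        have := hx.2
        rw [hε] at *
        linarith [hy.1]
      have h0 : 0 < y - x := lt_of_lt_of_le hεpos hyx
      rw [norm_mul, norm_inv, Real.norm_eq_abs, abs_of_pos h0, Real.norm_eq_abs,
        abs_of_nonneg (by positivity : (0:ℝ) ≤ Real.sqrt (4 - x^2) / (2*π))]
      exact mul_le_mul_of_nonneg_right (inv_anti₀ hεpos hyx) (by positivity))
    (by
      have hc : Continuous (fun x : ℝ => ε⁻¹ * (Real.sqrt (4 - x^2) / (2*π))) :=
        continuous_const.mul ((Real.continuous_sqrt.comp (by fun_prop)).div_const _)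
      exact (hc.integrableOn_Icc).mono_set Set.Ioc_subset_Icc_self)
    (by
      filter_upwards [ae_restrict_mem measurableSet_Ioc] with x hx
      intro y hy
      rw [Metric.mem_ball, Real.dist_eq, abs_lt] at hy
      have h0 : 0 < y - x := by
        have := hx.2
        rw [hε] at *
        linarith [hy.1]
      have dlog : HasDerivAt (fun y : ℝ => Real.log (y - x)) ((y - x)⁻¹ * 1) y := by
        simpa [Function.comp_def] using (Real.hasDerivAt_log h0.ne').comp y ((hasDerivAt_id y).sub_const x)
      simpa using dlog.mul_const _)
  obtain ⟨-, hD⟩ := key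
  have : Phi = fun z => ∫ x in Set.Ioc (-2:ℝ) 2, Real.log (z - x) * (Real.sqrt (4 - x^2) / (2*π)) := rfl
  rw [this]
  refine hD.congr_deriv (Eq.symm ?_)
  have hset : ∫ x in Set.Ioc (-2:ℝ) 2, (z - x)⁻¹ * (Real.sqrt (4 - x^2) / (2*π))
      = ∫ x in (-2:ℝ)..2, (z - x)⁻¹ * (Real.sqrt (4 - x^2) / (2*π)) :=
    (intervalIntegral.integral_of_le (by norm_num)).symm
  rw [hset]
  have : ∀ x ∈ Set.uIcc (-2:ℝ) 2, (z - x)⁻¹ * (Real.sqrt (4 - x^2) / (2*π))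
      = (Real.sqrt (4 - x^2) / (z - x)) / (2*π) := by
    intro x hx
    rw [Set.uIcc_of_le (by norm_num)] at hx
    have : 0 < z - x := by linarith [hx.2]
    field_simp
  rw [intervalIntegral.integral_congr this, intervalIntegral.integral_div, stieltjes hz]
  have hπ : (π : ℝ) ≠ 0 := Real.pi_ne_zero
  field_simp

lemma D_const {a b : ℝ} (ha : 2 < a) (hab : a ≤ b) : Phi b - Psi b = Phi a - Psi a := by
  have h := intervalIntegral.integral_eq_sub_of_hasDerivAt
    (f := fun z => Phi z - Psi z) (f' := fun _ => (0:ℝ))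
    (fun z hz => by
      rw [Set.uIcc_of_le hab] at hz
      have h2 : 2 < z := lt_of_lt_of_le ha hz.1
      simpa using (Phi_deriv h2).fun_sub (Psi_deriv h2))
    (intervalIntegrable_const)
  simp only [intervalIntegral.integral_const, smul_zero, sub_eq_zero] at h
  linarith

lemma w_div_tendsto : Filter.Tendsto (fun z : ℝ => Real.sqrt (z^2 - 4) / z) Filter.atTop (nhds 1) := by
  have h0 : Filter.Tendsto (fun z : ℝ => 4 / z^2) Filter.atTop (nhds 0) :=
    Filter.Tendsto.div_atTop tendsto_const_nhds (Filter.tendsto_pow_atTop (by norm_num))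
  have h1 : Filter.Tendsto (fun z : ℝ => Real.sqrt (1 - 4 / z^2)) Filter.atTop (nhds 1) := by
    have hsub : Filter.Tendsto (fun z : ℝ => 1 - 4 / z^2) Filter.atTop (nhds 1) := by
      have := (tendsto_const_nhds (x := (1:ℝ)) (f := Filter.atTop (α := ℝ))).sub h0
      simpa using this
    have := (Real.continuous_sqrt.continuousAt (x := (1:ℝ))).tendsto.comp hsub
    simpa [Function.comp_def] using this
  apply h1.congr'
  filter_upwards [Filter.eventually_ge_atTop (2:ℝ)] with z hz
  have hzpos : 0 < z := by linarith
  rw [show (1:ℝ) - 4/z^2 = (z^2 - 4)/z^2 by field_simp,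
    Real.sqrt_div (by nlinarith) , Real.sqrt_sq hzpos.le]

lemma frac_tendsto : Filter.Tendsto (fun z : ℝ => z / (z + Real.sqrt (z^2 - 4)))
    Filter.atTop (nhds (1/2)) := by
  have h1 : Filter.Tendsto (fun z : ℝ => 1 + Real.sqrt (z^2-4)/z) Filter.atTop (nhds 2) := by
    have := (tendsto_const_nhds (x := (1:ℝ)) (f := Filter.atTop (α := ℝ))).add w_div_tendsto
    norm_num at this ⊢
    exact this
  have h2 : Filter.Tendsto (fun z : ℝ => 1 / (1 + Real.sqrt (z^2-4)/z))
      Filter.atTop (nhds (1/2)) := by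
    have := h1.inv₀ (by norm_num)
    simp only [one_div]
    convert this using 2 <;> norm_num
  apply h2.congr'
  filter_upwards [Filter.eventually_ge_atTop (2:ℝ)] with z hz
  have hzpos : 0 < z := by linarith
  have hw : 0 ≤ Real.sqrt (z^2-4) := Real.sqrt_nonneg _
  rw [eq_comm, div_eq_div_iff (by positivity) (by positivity)]
  field_simp

lemma one_plus_tendsto : Filter.Tendsto (fun z : ℝ => 1 + Real.sqrt (z^2-4)/z)
    Filter.atTop (nhds 2) := by
  have := (tendsto_const_nhds (x := (1:ℝ)) (f := Filter.atTop (α := ℝ))).add w_div_tendsto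
  norm_num at this ⊢
  exact this

lemma ratio_tendsto (c : ℝ) : Filter.Tendsto (fun z : ℝ => 2*(z+c)/(z + Real.sqrt (z^2-4)))
    Filter.atTop (nhds 1) := by
  have hnum : Filter.Tendsto (fun z : ℝ => 2 + 2*c/z) Filter.atTop (nhds 2) := by
    have h0 : Filter.Tendsto (fun z : ℝ => 2*c/z) Filter.atTop (nhds 0) :=
      Filter.Tendsto.div_atTop tendsto_const_nhds Filter.tendsto_id
    have := (tendsto_const_nhds (x := (2:ℝ)) (f := Filter.atTop (α := ℝ))).add h0
    simpa using this
  have h2 := hnum.div one_plus_tendsto (by norm_num)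
  norm_num at h2
  apply h2.congr'
  filter_upwards [Filter.eventually_ge_atTop (2:ℝ)] with z hz
  have hzpos : 0 < z := by linarith
  have hw : 0 ≤ Real.sqrt (z^2-4) := Real.sqrt_nonneg _
  show (2 + 2*c/z) / (1 + Real.sqrt (z^2-4)/z) = _
  rw [div_eq_div_iff (by positivity) (by positivity)]
  field_simp

lemma log_psi_tendsto (c : ℝ) :
    Filter.Tendsto (fun z : ℝ => Real.log (z + c) - Psi z) Filter.atTop (nhds 0) := by
  have hlog : Filter.Tendsto (fun z : ℝ => Real.log (2*(z+c)/(z + Real.sqrt (z^2-4))))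
      Filter.atTop (nhds 0) := by
    have := (Real.continuousAt_log one_ne_zero).tendsto.comp (ratio_tendsto c)
    simpa [Function.comp_def] using this
  have hmain := (hlog.sub frac_tendsto).add
    (tendsto_const_nhds (x := (1/2:ℝ)) (f := Filter.atTop (α := ℝ)))
  norm_num at hmain
  apply hmain.congr'
  filter_upwards [Filter.eventually_ge_atTop (max 3 (|c|+1))] with z hz
  have hz3 : 3 ≤ z := le_trans (le_max_left _ _) hz
  have hzc1 : |c| + 1 ≤ z := le_trans (le_max_right _ _) hz
  have hzc : 0 < z + c := by linarith [neg_abs_le c]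
  have hz2 : 2 < z := by linarith
  have hw2 : 0 < z^2 - 4 := by nlinarith
  set w := Real.sqrt (z^2 - 4) with hw_def
  have hw : 0 < w := Real.sqrt_pos.2 hw2
  have hwq : w ^ 2 = z^2 - 4 := Real.sq_sqrt hw2.le
  have hzw : 0 < z + w := by linarith
  have hlogeq : Real.log (2*(z+c)/(z+w)) = Real.log 2 + Real.log (z+c) - Real.log (z+w) := by
    rw [Real.log_div (by positivity) hzw.ne', Real.log_mul (by norm_num) hzc.ne']
  have hfrac : (1/4) * z * (z - w) = z / (z + w) := by
    rw [eq_div_iff hzw.ne']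
    linear_combination (-z/4) * hwq
  simp only [Psi, hlogeq]
  rw [← hfrac]
  ring

lemma density_int : ∫ x in Set.Ioc (-2:ℝ) 2, Real.sqrt (4 - x^2) / (2*π) = 1 := by
  rw [← intervalIntegral.integral_of_le (by norm_num : (-2:ℝ) ≤ 2),
    intervalIntegral.integral_div, mass]
  have : (π:ℝ) ≠ 0 := Real.pi_ne_zero
  field_simp

lemma Phi_le {z : ℝ} (hz : 2 < z) : Phi z ≤ Real.log (z + 2) := by
  have hmono : ∀ x ∈ Set.Ioc (-2:ℝ) 2,
      Real.log (z - x) * (Real.sqrt (4 - x^2) / (2*π))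
        ≤ Real.log (z + 2) * (Real.sqrt (4 - x^2) / (2*π)) := by
    intro x hx
    have h0 : 0 < z - x := by linarith [hx.2]
    apply mul_le_mul_of_nonneg_right _ (by positivity)
    exact Real.log_le_log h0 (by linarith [hx.1])
  have hint2 : IntegrableOn (fun x : ℝ => Real.log (z+2) * (Real.sqrt (4 - x^2) / (2*π)))
      (Set.Ioc (-2:ℝ) 2) volume := by
    have hc : Continuous (fun x : ℝ => Real.log (z+2) * (Real.sqrt (4 - x^2) / (2*π))) :=
      continuous_const.mul ((Real.continuous_sqrt.comp (by fun_prop)).div_const _)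
    exact (hc.integrableOn_Icc).mono_set Set.Ioc_subset_Icc_self
  have := setIntegral_mono_on (integrable_integrand hz) hint2 measurableSet_Ioc hmono
  calc Phi z ≤ ∫ x in Set.Ioc (-2:ℝ) 2, Real.log (z+2) * (Real.sqrt (4 - x^2) / (2*π)) := this
    _ = Real.log (z+2) * ∫ x in Set.Ioc (-2:ℝ) 2, (Real.sqrt (4 - x^2) / (2*π)) :=
        integral_const_mul _ _
    _ = Real.log (z+2) := by rw [density_int, mul_one]

lemma le_Phi {z : ℝ} (hz : 2 < z) : Real.log (z - 2) ≤ Phi z := by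
  have hmono : ∀ x ∈ Set.Ioc (-2:ℝ) 2,
      Real.log (z - 2) * (Real.sqrt (4 - x^2) / (2*π))
        ≤ Real.log (z - x) * (Real.sqrt (4 - x^2) / (2*π)) := by
    intro x hx
    apply mul_le_mul_of_nonneg_right _ (by positivity)
    exact Real.log_le_log (by linarith) (by linarith [hx.2])
  have hint2 : IntegrableOn (fun x : ℝ => Real.log (z-2) * (Real.sqrt (4 - x^2) / (2*π)))
      (Set.Ioc (-2:ℝ) 2) volume := by
    have hc : Continuous (fun x : ℝ => Real.log (z-2) * (Real.sqrt (4 - x^2) / (2*π))) :=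
      continuous_const.mul ((Real.continuous_sqrt.comp (by fun_prop)).div_const _)
    exact (hc.integrableOn_Icc).mono_set Set.Ioc_subset_Icc_self
  have := setIntegral_mono_on hint2 (integrable_integrand hz) measurableSet_Ioc hmono
  calc Real.log (z-2) = Real.log (z-2) * ∫ x in Set.Ioc (-2:ℝ) 2, (Real.sqrt (4 - x^2) / (2*π)) := by
        rw [density_int, mul_one]
    _ = ∫ x in Set.Ioc (-2:ℝ) 2, Real.log (z-2) * (Real.sqrt (4 - x^2) / (2*π)) :=
        (integral_const_mul _ _).symm
    _ ≤ Phi z := this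

lemma Phi_eq_Psi {z : ℝ} (hz : 2 < z) : Phi z = Psi z := by
  have hc0 : Phi 3 - Psi 3 = 0 := by
    have hub : ∀ᶠ y in Filter.atTop, Phi 3 - Psi 3 ≤ Real.log (y + 2) - Psi y := by
      filter_upwards [Filter.eventually_ge_atTop (3:ℝ)] with y hy
      have h2y : (2:ℝ) < y := by linarith
      have hD := D_const (by norm_num : (2:ℝ) < 3) hy
      linarith [Phi_le h2y]
    have hlb : ∀ᶠ y in Filter.atTop, Real.log (y + (-2)) - Psi y ≤ Phi 3 - Psi 3 := by
      filter_upwards [Filter.eventually_ge_atTop (3:ℝ)] with y hy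
      have h2y : (2:ℝ) < y := by linarith
      have hD := D_const (by norm_num : (2:ℝ) < 3) hy
      have := le_Phi h2y
      rw [show y + (-2) = y - 2 by ring]
      linarith
    have h1 : Phi 3 - Psi 3 ≤ 0 := ge_of_tendsto (log_psi_tendsto 2) hub
    have h2 : (0:ℝ) ≤ Phi 3 - Psi 3 := le_of_tendsto (log_psi_tendsto (-2)) hlb
    linarith
  rcases le_total z 3 with h | h
  · have := D_const hz h
    linarith
  · have := D_const (by norm_num : (2:ℝ) < 3) h
    linarith

lemma Psi_tendsto_two : Filter.Tendsto Psi (nhdsWithin 2 (Set.Ioi 2)) (nhds (Psi 2)) := by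
  have hw : ContinuousAt (fun z : ℝ => Real.sqrt (z^2 - 4)) 2 :=
    (Real.continuous_sqrt.comp (by fun_prop)).continuousAt
  have hct : ContinuousAt Psi 2 := by
    apply ContinuousAt.sub
    apply ContinuousAt.sub
    apply ContinuousAt.add
    · exact ((continuousAt_id.const_mul _).mul (continuousAt_id.sub hw))
    · have harg : ContinuousAt (fun z : ℝ => z + Real.sqrt (z^2-4)) 2 :=
        continuousAt_id.add hw
      have hval : (2:ℝ) + Real.sqrt ((2:ℝ)^2 - 4) = 2 := by norm_num
      have := harg.log (by norm_num)
      exact this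
    · exact continuousAt_const
    · exact continuousAt_const
  exact hct.tendsto.mono_left nhdsWithin_le_nhds

lemma Phi_tendsto_two : Filter.Tendsto Phi (nhdsWithin 2 (Set.Ioi 2)) (nhds (Phi 2)) := by
  have h2pi : (1:ℝ) ≤ 2 * π := by linarith [Real.pi_gt_three]
  apply MeasureTheory.tendsto_integral_filter_of_dominated_convergence
    (bound := fun _ : ℝ => (24:ℝ))
  · exact Filter.Eventually.of_forall (fun z => integrand_meas z)
  · filter_upwards [Ioc_mem_nhdsGT_of_mem (Set.mem_Ico.2 ⟨le_refl (2:ℝ), (by norm_num : (2:ℝ) < 3)⟩)] with z hz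
    filter_upwards [ae_restrict_mem measurableSet_Ioc] with x hx
    rw [Real.norm_eq_abs, ← mul_div_assoc, abs_div, abs_of_pos (by positivity : (0:ℝ) < 2*π)]
    calc |Real.log (z - x) * Real.sqrt (4 - x^2)| / (2*π)
        ≤ |Real.log (z - x) * Real.sqrt (4 - x^2)| := div_le_self (abs_nonneg _) h2pi
      _ ≤ 24 := unif_bound hz.1.le hz.2 hx.1.le hx.2
  · rw [MeasureTheory.integrable_const_iff]
    right
    rw [isFiniteMeasure_restrict, ← lt_top_iff_ne_top]
    exact measure_Ioc_lt_top
  · have hne : ∀ᵐ x ∂(volume.restrict (Set.Ioc (-2:ℝ) 2)), x ≠ 2 := by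
      rw [ae_iff]
      have : {x : ℝ | ¬ x ≠ 2} = {2} := by ext x; simp
      rw [this]
      exact le_antisymm (le_trans (Measure.restrict_apply_le _ _)
        (le_of_eq Real.volume_singleton)) (zero_le ..)
    filter_upwards [ae_restrict_mem measurableSet_Ioc, hne] with x hx hxne
    have h2x : (2:ℝ) - x ≠ 0 := by
      intro h
      exact hxne (by linarith [sub_eq_zero.1 h])
    have hct : ContinuousAt (fun z : ℝ => Real.log (z - x) * (Real.sqrt (4 - x^2) / (2*π))) 2 := by
      exact ((continuousAt_id.sub continuousAt_const).log h2x).mul continuousAt_const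
    exact hct.tendsto.mono_left nhdsWithin_le_nhds

lemma Phi_two_eq : Phi 2 = Psi 2 := by
  have heq : Phi =ᶠ[nhdsWithin 2 (Set.Ioi 2)] Psi := by
    filter_upwards [self_mem_nhdsWithin] with z hz
    exact Phi_eq_Psi hz
  exact tendsto_nhds_unique (Phi_tendsto_two.congr' heq) Psi_tendsto_two

/-- **Logarithmic potential of the semicircular law.**  For every real `z ≥ 2`,
`∫ log(z − x) dμ_sc(x) = (1/4) z (z − √(z² − 4)) + log(z + √(z² − 4)) − log 2 − 1/2`. -/
theorem integral_log_sub_semicircle (z : ℝ) (hz : 2 ≤ z) :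
    ∫ x, Real.log (z - x) ∂semicircleLaw =
      (1 / 4) * z * (z - Real.sqrt (z ^ 2 - 4)) + Real.log (z + Real.sqrt (z ^ 2 - 4))
        - Real.log 2 - 1 / 2 := by
  rw [reduction]
  show Phi z = Psi z
  rcases hz.eq_or_lt with h | h
  · rw [← h]
    exact Phi_two_eq
  · exact Phi_eq_Psi h
end

section
/- Let μ_sc be the semicircular law, the probability measure on ℝ with density f(x) = (1/(2π))√(4 − x²) on [−2, 2] and zero elsewhere. Then ∫_{−2}^{2} log(2 − x) dμ_sc(x) = 1/2. -/
open MeasureTheory Real NNReal intervalIntegral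

/-! ### Auxiliary integrability lemmas -/

lemma intervalIntegrable_log_zero_one : IntervalIntegrable Real.log volume 0 1 := by
  have h : IntegrableOn (fun x : ℝ => -Real.log x) (Set.Ioc (0:ℝ) 1) volume := by
    apply integrableOn_deriv_of_nonneg (g := fun x => x - x * Real.log x)
    · exact (continuous_id.sub Real.continuous_mul_log).continuousOn
    · intro x hx
      have := ((hasDerivAt_id x).sub (Real.hasDerivAt_mul_log (ne_of_gt hx.1)))
      exact this.congr_deriv (by ring)
    · intro x hx
      simp only [neg_nonneg]
      exact Real.log_nonpos hx.1.le hx.2.le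
  rw [intervalIntegrable_iff_integrableOn_Ioc_of_le zero_le_one]
  exact h.neg.congr (Filter.Eventually.of_forall (fun x => by simp))

lemma intervalIntegrable_log_zero : IntervalIntegrable Real.log volume 0 (π/2) := by
  refine intervalIntegrable_log_zero_one.trans ?_
  apply intervalIntegrable_log
  rw [Set.uIcc_of_le (by linarith [pi_gt_three] : (1:ℝ) ≤ π/2)]
  intro h; exact absurd h.1 (by norm_num)

lemma intervalIntegrable_log_sin_half : IntervalIntegrable (fun x => Real.log (Real.sin x)) volume 0 (π/2) := by
  rw [intervalIntegrable_iff_integrableOn_Ioc_of_le (by positivity)]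
  have hg : IntegrableOn (fun x : ℝ => Real.log x + Real.log (2/π)) (Set.Ioc (0:ℝ) (π/2)) volume := by
    apply Integrable.add
    · exact (intervalIntegrable_iff_integrableOn_Ioc_of_le (by positivity)).mp intervalIntegrable_log_zero
    · exact integrableOn_const (by simp [Real.volume_Ioc])
  refine Integrable.mono hg ?_ ?_
  · exact ((Real.measurable_log.comp Real.measurable_sin).aestronglyMeasurable).restrict
  · rw [MeasureTheory.ae_restrict_iff' measurableSet_Ioc]
    refine Filter.Eventually.of_forall (fun x hx => ?_)
    obtain ⟨hx0, hx2⟩ := hx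
    have hsin : 2/π * x ≤ Real.sin x := Real.mul_le_sin hx0.le hx2
    have hp : (0:ℝ) < 2/π * x := by positivity
    have h1 : Real.log (2/π * x) ≤ Real.log (Real.sin x) := Real.log_le_log hp hsin
    have h2 : Real.log (Real.sin x) ≤ 0 := Real.log_nonpos
      (Real.sin_nonneg_of_nonneg_of_le_pi hx0.le (by linarith [Real.pi_pos])) (Real.sin_le_one x)
    have h3 : Real.log (2/π * x) ≤ 0 := Real.log_nonpos hp.le
      (by rw [div_mul_eq_mul_div, mul_comm]; exact (div_le_one Real.pi_pos).mpr (by linarith))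
    have h4 : Real.log (2/π * x) = Real.log x + Real.log (2/π) := by
      rw [Real.log_mul (by positivity) (ne_of_gt hx0), add_comm]
    simp only [Real.norm_eq_abs]
    rw [abs_of_nonpos h2, abs_of_nonpos (h4 ▸ h3)]
    linarith [h4 ▸ h1]

lemma intervalIntegrable_log_sin' : IntervalIntegrable (fun x => Real.log (Real.sin x)) volume (π/2) π := by
  have h := intervalIntegrable_log_sin_half.comp_sub_left π
  simp only [Real.sin_pi_sub] at h
  have : π - 0 = π := by ring
  rw [this, show π - π/2 = π/2 by ring] at h
  exact h.symm

lemma intervalIntegrable_log_cos_half : IntervalIntegrable (fun x => Real.log (Real.cos x)) volume 0 (π/2) := by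
  have h := intervalIntegrable_log_sin_half.comp_sub_left (π/2)
  simp only [Real.sin_pi_div_two_sub] at h
  simpa using h.symm

/-! ### The classical integral `∫ log sin = -(π/2) log 2` -/

lemma integral_log_sin_pi : ∫ x in (0:ℝ)..π, Real.log (Real.sin x)
    = 2 * ∫ x in (0:ℝ)..(π/2), Real.log (Real.sin x) := by
  have hsplit := integral_add_adjacent_intervals intervalIntegrable_log_sin_half intervalIntegrable_log_sin'
  have h2 : ∫ x in (π/2)..π, Real.log (Real.sin x) = ∫ x in (0:ℝ)..(π/2), Real.log (Real.sin x) := by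
    have h := integral_comp_sub_left (fun x => Real.log (Real.sin x)) π (a := 0) (b := π/2)
    rw [show π - π/2 = π/2 by ring, show π - 0 = π by ring] at h
    rw [← h]
    congr 1; ext x; rw [Real.sin_pi_sub]
  rw [← hsplit, h2]; ring

lemma integral_log_sin_eq : ∫ x in (0:ℝ)..(π/2), Real.log (Real.sin x) = -(π/2) * Real.log 2 := by
  set I := ∫ x in (0:ℝ)..(π/2), Real.log (Real.sin x) with hI
  have hcos : ∫ x in (0:ℝ)..(π/2), Real.log (Real.cos x) = I := by
    have h := integral_comp_sub_left (fun x => Real.log (Real.sin x)) (π/2) (a := 0) (b := π/2)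
    simp only [sub_zero, sub_self] at h
    rw [hI, ← h]
    congr 1; ext x; rw [Real.sin_pi_div_two_sub]
  have hdouble : ∫ x in (0:ℝ)..(π/2), Real.log (Real.sin (2*x)) = I := by
    have h := integral_comp_mul_left (c := 2) (fun x => Real.log (Real.sin x)) (a := 0) (b := π/2) two_ne_zero
    rw [mul_zero, show 2 * (π/2) = π by ring] at h
    rw [h, integral_log_sin_pi]
    simp [hI]
  have hint2 : IntervalIntegrable (fun x => Real.log (Real.sin (2*x))) volume 0 (π/2) := by
    have h := (intervalIntegrable_log_sin_half.trans intervalIntegrable_log_sin').comp_mul_left (c := 2)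
    simpa using h
  have hae : ∀ᵐ x ∂(volume : Measure ℝ), x ∈ Set.uIoc (0:ℝ) (π/2) →
      Real.log (Real.sin x) + Real.log (Real.cos x) = Real.log (Real.sin (2*x)) - Real.log 2 := by
    have hne : ∀ᵐ x ∂(volume : Measure ℝ), x ≠ π/2 := by
      rw [Filter.eventually_iff, mem_ae_iff]
      simp [show {x : ℝ | x ≠ π/2}ᶜ = {π/2} by ext y; simp]
    filter_upwards [hne] with x hne hx
    rw [Set.uIoc_of_le (by positivity)] at hx
    have hx1 : 0 < x := hx.1
    have hx2 : x < π/2 := lt_of_le_of_ne hx.2 hne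
    have hs : 0 < Real.sin x := Real.sin_pos_of_pos_of_lt_pi hx1 (by linarith [Real.pi_pos])
    have hc : 0 < Real.cos x := Real.cos_pos_of_mem_Ioo ⟨by linarith [Real.pi_pos], hx2⟩
    have h2 : Real.sin (2*x) = 2 * (Real.sin x * Real.cos x) := by
      rw [Real.sin_two_mul]; ring
    rw [h2, Real.log_mul two_ne_zero (by positivity), Real.log_mul hs.ne' hc.ne']
    ring
  have key : I + I = I - (π/2) * Real.log 2 := by
    calc I + I = ∫ x in (0:ℝ)..(π/2), (Real.log (Real.sin x) + Real.log (Real.cos x)) := by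
          rw [integral_add intervalIntegrable_log_sin_half intervalIntegrable_log_cos_half, hcos]
      _ = ∫ x in (0:ℝ)..(π/2), (Real.log (Real.sin (2*x)) - Real.log 2) :=
          integral_congr_ae hae
      _ = I - (π/2) * Real.log 2 := by
          rw [integral_sub hint2 intervalIntegrable_const, hdouble, intervalIntegral.integral_const]
          simp [smul_eq_mul]
  linarith

lemma integral_log_cos_half : ∫ x in (0:ℝ)..(π/2), Real.log (Real.cos x) = -(π/2) * Real.log 2 := by
  have h := integral_comp_sub_left (fun x => Real.log (Real.sin x)) (π/2) (a := 0) (b := π/2)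
  simp only [sub_zero, sub_self] at h
  rw [← integral_log_sin_eq, ← h]
  congr 1; ext x; rw [Real.sin_pi_div_two_sub]

/-! ### Integrals of `log cos` over `[-π/2, π/2]` -/

lemma intervalIntegrable_log_cos_neg : IntervalIntegrable (fun x => Real.log (Real.cos x)) volume (-(π/2)) 0 := by
  have h := intervalIntegrable_log_cos_half.comp_sub_left 0
  simp only [zero_sub, Real.cos_neg, sub_zero, neg_zero] at h
  exact h.symm

lemma intervalIntegrable_log_cos' : IntervalIntegrable (fun x => Real.log (Real.cos x)) volume (-(π/2)) (π/2) :=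
  intervalIntegrable_log_cos_neg.trans intervalIntegrable_log_cos_half

lemma integral_log_cos_full : ∫ x in (-(π/2))..(π/2), Real.log (Real.cos x) = -π * Real.log 2 := by
  have hsplit := integral_add_adjacent_intervals intervalIntegrable_log_cos_neg intervalIntegrable_log_cos_half
  have hneg : ∫ x in (-(π/2))..(0:ℝ), Real.log (Real.cos x) = -(π/2) * Real.log 2 := by
    have h := integral_comp_neg (fun x => Real.log (Real.cos x)) (a := 0) (b := π/2)
    simp only [Real.cos_neg, neg_zero] at h
    rw [← h]; exact integral_log_cos_half
  rw [← hsplit, hneg, integral_log_cos_half]; ring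

lemma intervalIntegrable_cos2_log_cos :
    IntervalIntegrable (fun x => Real.cos (2*x) * Real.log (Real.cos x)) volume (-(π/2)) (π/2) :=
  intervalIntegrable_log_cos'.continuousOn_mul (Continuous.continuousOn (by continuity))

lemma integral_cos_two_mul_log_cos :
    ∫ x in (-(π/2))..(π/2), Real.cos (2*x) * Real.log (Real.cos x) = π/2 := by
  have hab : (-(π/2):ℝ) ≤ π/2 := by linarith [Real.pi_pos]
  set F : ℝ → ℝ := fun x => Real.sin x * (Real.cos x * Real.log (Real.cos x)) with hF
  have hcont : ContinuousOn F (Set.Icc (-(π/2)) (π/2)) :=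
    (Real.continuous_sin.mul (Real.continuous_mul_log.comp Real.continuous_cos)).continuousOn
  have hderiv : ∀ x ∈ Set.Ioo (-(π/2)) (π/2), HasDerivAt F
      (Real.cos (2*x) * Real.log (Real.cos x) - Real.sin x ^ 2) x := by
    intro x hx
    have hc : 0 < Real.cos x := Real.cos_pos_of_mem_Ioo hx
    have h1 : HasDerivAt (fun y : ℝ => Real.cos y * Real.log (Real.cos y))
        ((Real.log (Real.cos x) + 1) * (-Real.sin x)) x :=
      (Real.hasDerivAt_mul_log hc.ne').comp x (Real.hasDerivAt_cos x)
    have h2 := (Real.hasDerivAt_sin x).mul h1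
    exact h2.congr_deriv (by rw [Real.cos_two_mul']; ring)
  have hsinint : IntervalIntegrable (fun x => Real.sin x ^ 2) volume (-(π/2)) (π/2) :=
    (Real.continuous_sin.pow 2).intervalIntegrable _ _
  have hint : IntervalIntegrable (fun x => Real.cos (2*x) * Real.log (Real.cos x) - Real.sin x ^ 2)
      volume (-(π/2)) (π/2) := intervalIntegrable_cos2_log_cos.sub hsinint
  have hftc := integral_eq_sub_of_hasDerivAt_of_le hab hcont hderiv hint
  have hF2 : F (π/2) = 0 := by simp [hF]
  have hF1 : F (-(π/2)) = 0 := by simp [hF]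
  rw [hF1, hF2, sub_zero, integral_sub intervalIntegrable_cos2_log_cos hsinint] at hftc
  have hsin2 : ∫ x in (-(π/2))..(π/2), Real.sin x ^ 2 = π/2 := by
    rw [integral_sin_sq]; simp
  linarith

lemma integral_cos_sq_log_cos :
    ∫ x in (-(π/2))..(π/2), Real.cos x ^ 2 * Real.log (Real.cos x) = π/4 - (π/2) * Real.log 2 := by
  have h : ∀ x : ℝ, Real.cos x ^ 2 * Real.log (Real.cos x)
      = (1/2) * Real.log (Real.cos x) + (1/2) * (Real.cos (2*x) * Real.log (Real.cos x)) := by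
    intro x; rw [Real.cos_sq]; ring
  rw [integral_congr (fun x _ => h x), integral_add
      (intervalIntegrable_log_cos'.const_mul _) (intervalIntegrable_cos2_log_cos.const_mul _),
    intervalIntegral.integral_const_mul, intervalIntegral.integral_const_mul, integral_log_cos_full, integral_cos_two_mul_log_cos]
  ring

/-! ### The key interval integrals -/

lemma sqrt_mul_log_eq (t : ℝ) : Real.log t * Real.sqrt t = 2 * (Real.sqrt t * Real.log (Real.sqrt t)) := by
  rcases le_or_gt t 0 with ht | ht
  · rw [Real.sqrt_eq_zero'.mpr ht]; ring
  · rw [Real.log_sqrt ht.le]; ring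

lemma continuous_g : Continuous (fun x : ℝ => Real.log (4 - x^2) * Real.sqrt (4 - x^2)) := by
  have h : (fun x : ℝ => Real.log (4 - x^2) * Real.sqrt (4 - x^2))
      = fun x => 2 * (Real.sqrt (4 - x^2) * Real.log (Real.sqrt (4 - x^2))) := by
    funext x; exact sqrt_mul_log_eq _
  rw [h]
  exact continuous_const.mul (Real.continuous_mul_log.comp (Real.continuous_sqrt.comp (by continuity)))

lemma integral_g : ∫ x in (-2:ℝ)..2, Real.log (4 - x^2) * Real.sqrt (4 - x^2) = 2*π := by
  have hsub := intervalIntegral.integral_comp_smul_deriv (a := -(π/2)) (b := π/2)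
    (f := fun φ => 2 * Real.sin φ) (f' := fun φ => 2 * Real.cos φ)
    (g := fun x => Real.log (4 - x^2) * Real.sqrt (4 - x^2))
    (fun x _ => by simpa using ((Real.hasDerivAt_sin x).const_mul 2))
    (Continuous.continuousOn (by continuity)) continuous_g
  simp only [Real.sin_neg, Real.sin_pi_div_two, mul_neg, mul_one] at hsub
  rw [show (-2:ℝ) = -(2:ℝ) by norm_num, ← hsub]
  have heq : ∀ φ ∈ Set.uIcc (-(π/2)) (π/2),
      (2 * Real.cos φ) • ((fun x => Real.log (4 - x^2) * Real.sqrt (4 - x^2)) ∘ (fun φ => 2 * Real.sin φ)) φ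
      = (4 * Real.log 4) * Real.cos φ ^ 2 + 8 * (Real.cos φ ^ 2 * Real.log (Real.cos φ)) := by
    intro φ hφ
    rw [Set.uIcc_of_le (by linarith [Real.pi_pos])] at hφ
    have hc : 0 ≤ Real.cos φ := Real.cos_nonneg_of_mem_Icc hφ
    have h4 : 4 - (2 * Real.sin φ)^2 = 4 * Real.cos φ ^ 2 := by
      have := Real.sin_sq_add_cos_sq φ; nlinarith
    simp only [Function.comp_apply, smul_eq_mul, h4]
    rw [show (4 : ℝ) * Real.cos φ ^ 2 = (2 * Real.cos φ)^2 by ring, Real.sqrt_sq (by linarith)]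
    rcases eq_or_lt_of_le hc with hc0 | hc0
    · rw [← hc0]; ring
    · rw [show (2 * Real.cos φ)^2 = 4 * Real.cos φ ^ 2 by ring,
        Real.log_mul (by norm_num) (by positivity), Real.log_pow]
      push_cast
      ring
  have hccl : IntervalIntegrable (fun x => Real.cos x ^ 2 * Real.log (Real.cos x)) volume (-(π/2)) (π/2) :=
    intervalIntegrable_log_cos'.continuousOn_mul (Continuous.continuousOn (by continuity))
  rw [integral_congr heq, integral_add ((show IntervalIntegrable (fun x => Real.cos x ^ 2) volume (-(π/2)) (π/2) from (Real.continuous_cos.pow 2).intervalIntegrable _ _).const_mul _)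
    (hccl.const_mul 8), intervalIntegral.integral_const_mul, intervalIntegral.integral_const_mul, integral_cos_sq,
    integral_cos_sq_log_cos]
  have hl4 : Real.log 4 = 2 * Real.log 2 := by
    rw [show (4:ℝ) = 2^2 by norm_num, Real.log_pow]; push_cast; ring
  rw [hl4]
  simp
  ring

lemma contOn_A : ContinuousOn (fun x : ℝ => Real.log (2 - x) * Real.sqrt (4 - x^2))
    (Set.uIcc (-2:ℝ) 2) := by
  have hcont : Continuous (fun x : ℝ =>
      (2 * (Real.sqrt (2 - x) * Real.log (Real.sqrt (2 - x)))) * Real.sqrt (2 + x)) := by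
    exact (continuous_const.mul (Real.continuous_mul_log.comp
      (Real.continuous_sqrt.comp (by continuity)))).mul (Real.continuous_sqrt.comp (by continuity))
  apply ContinuousOn.congr hcont.continuousOn
  intro x hx
  rw [Set.uIcc_of_le (by norm_num)] at hx
  have h1 : (0:ℝ) ≤ 2 - x := by linarith [hx.2]
  have h2 : 4 - x^2 = (2 - x) * (2 + x) := by ring
  beta_reduce
  rw [h2, Real.sqrt_mul h1, ← sqrt_mul_log_eq]
  ring

lemma contOn_B : ContinuousOn (fun x : ℝ => Real.log (2 + x) * Real.sqrt (4 - x^2))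
    (Set.uIcc (-2:ℝ) 2) := by
  have hcont : Continuous (fun x : ℝ =>
      (2 * (Real.sqrt (2 + x) * Real.log (Real.sqrt (2 + x)))) * Real.sqrt (2 - x)) := by
    exact (continuous_const.mul (Real.continuous_mul_log.comp
      (Real.continuous_sqrt.comp (by continuity)))).mul (Real.continuous_sqrt.comp (by continuity))
  apply ContinuousOn.congr hcont.continuousOn
  intro x hx
  rw [Set.uIcc_of_le (by norm_num)] at hx
  have h1 : (0:ℝ) ≤ 2 + x := by linarith [hx.1]
  have h2 : 4 - x^2 = (2 + x) * (2 - x) := by ring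
  beta_reduce
  rw [h2, Real.sqrt_mul h1, ← sqrt_mul_log_eq]
  ring

lemma integral_A : ∫ x in (-2:ℝ)..2, Real.log (2 - x) * Real.sqrt (4 - x^2) = π := by
  have hAint : IntervalIntegrable (fun x : ℝ => Real.log (2 - x) * Real.sqrt (4 - x^2)) volume (-2) 2 :=
    contOn_A.intervalIntegrable
  have hBint : IntervalIntegrable (fun x : ℝ => Real.log (2 + x) * Real.sqrt (4 - x^2)) volume (-2) 2 :=
    contOn_B.intervalIntegrable
  have hBA : ∫ x in (-2:ℝ)..2, Real.log (2 + x) * Real.sqrt (4 - x^2)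
      = ∫ x in (-2:ℝ)..2, Real.log (2 - x) * Real.sqrt (4 - x^2) := by
    have h := integral_comp_neg (fun x => Real.log (2 - x) * Real.sqrt (4 - x^2)) (a := (-2:ℝ)) (b := 2)
    simp only [sub_neg_eq_add, neg_neg] at h
    rw [← h]
    apply integral_congr
    intro x _
    norm_num [neg_pow]
  have hsum : (∫ x in (-2:ℝ)..2, Real.log (2 - x) * Real.sqrt (4 - x^2))
      + ∫ x in (-2:ℝ)..2, Real.log (2 + x) * Real.sqrt (4 - x^2) = 2*π := by
    rw [← integral_add hAint hBint, ← integral_g]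
    apply integral_congr
    intro x hx
    rw [Set.uIcc_of_le (by norm_num)] at hx
    rcases eq_or_lt_of_le hx.1 with h1 | h1
    · rw [← h1]; norm_num
    rcases eq_or_lt_of_le hx.2 with h2 | h2
    · rw [h2]; norm_num
    have ha : (0:ℝ) < 2 - x := by linarith
    have hb : (0:ℝ) < 2 + x := by linarith
    beta_reduce
    rw [show (4:ℝ) - x^2 = (2-x)*(2+x) by ring, Real.log_mul ha.ne' hb.ne']
    ring
  linarith [hBA, hsum]

/-- `∫ log(2 − x) dμ_sc(x) = 1/2` for the semicircular law `μ_sc`. -/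
theorem integral_log_two_sub_semicircle :
    ∫ x, Real.log (2 - x) ∂semicircleLaw = 1 / 2 := by
  set d : ℝ → ℝ := fun x => if |x| ≤ 2 then Real.sqrt (4 - x ^ 2) / (2 * π) else 0 with hd
  have hdnn : ∀ x, 0 ≤ d x := by
    intro x; rw [hd]; dsimp only
    split
    · positivity
    · exact le_rfl
  have hdmeas : Measurable fun x => (d x).toNNReal := by
    apply Measurable.real_toNNReal
    apply Measurable.ite
    · exact measurableSet_le (continuous_abs.measurable) measurable_const
    · exact ((Real.continuous_sqrt.comp (by continuity)).measurable).div_const _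
    · exact measurable_const
  have h1 : semicircleLaw = volume.withDensity (fun x => ((d x).toNNReal : ENNReal)) := by
    unfold semicircleLaw
    congr 1
  rw [h1, integral_withDensity_eq_integral_smul hdmeas]
  have h2 : ∀ x, (d x).toNNReal • Real.log (2 - x)
      = Set.indicator (Set.Icc (-2:ℝ) 2) (fun x => Real.sqrt (4 - x ^ 2) / (2 * π) * Real.log (2 - x)) x := by
    intro x
    rw [NNReal.smul_def, smul_eq_mul, Real.coe_toNNReal _ (hdnn x), hd]
    by_cases hx : |x| ≤ 2
    · rw [Set.indicator_of_mem (Set.mem_Icc.mpr (abs_le.mp hx))]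
      simp [hx]
    · rw [Set.indicator_of_notMem (by rwa [Set.mem_Icc, ← abs_le])]
      simp [hx]
  simp_rw [h2]
  rw [MeasureTheory.integral_indicator measurableSet_Icc, MeasureTheory.integral_Icc_eq_integral_Ioc,
    ← intervalIntegral.integral_of_le (by norm_num : (-2:ℝ) ≤ 2)]
  have h3 : ∫ x in (-2:ℝ)..2, Real.sqrt (4 - x ^ 2) / (2 * π) * Real.log (2 - x)
      = (2*π)⁻¹ * ∫ x in (-2:ℝ)..2, Real.log (2 - x) * Real.sqrt (4 - x ^ 2) := by
    rw [← intervalIntegral.integral_const_mul]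
    apply intervalIntegral.integral_congr
    intro x _
    beta_reduce
    ring
  rw [h3, integral_A]
  field_simp
end

section
/- Let μ_sc be the semicircular law, and for each K ≥ 2 let 2 = λ̃_1^{(K)} ≥ λ̃_2^{(K)} ≥ … ≥ λ̃_K^{(K)} ≥ λ̃_{K+1}^{(K)} = −2 be points such that μ_sc([λ̃_{j+1}^{(K)}, λ̃_j^{(K)}]) = 1/K for each j = 1, …, K. Fix β > 1 and set z_K = 2 + 1/((β − 1)K). Then (1/K) Σ_{i=2}^{K} 1/(z_K − λ̃_i^{(K)}) → 1 as K → ∞; consequently, since (1/K)·1/(z_K − λ̃_1^{(K)}) = β − 1, one has (1/K) Σ_{i=1}^{K} 1/(z_K − λ̃_i^{(K)}) → β as K → ∞. -/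
open MeasureTheory Filter Real

open Set

noncomputable def scf (x : ℝ) : ℝ := Real.sqrt (4 - x ^ 2) / (2 * π)

lemma scf_nonneg (x : ℝ) : 0 ≤ scf x := div_nonneg (Real.sqrt_nonneg _) (by positivity)

lemma scf_cont : Continuous scf := ((continuous_const.sub (continuous_pow 2)).sqrt).div_const _

lemma scf_pos {x : ℝ} (h1 : -2 < x) (h2 : x < 2) : 0 < scf x := by
  have : 0 < 4 - x ^ 2 := by nlinarith
  exact div_pos (Real.sqrt_pos.2 this) (by positivity)

lemma scf_sqrt_factor {x : ℝ} (h1 : -2 ≤ x) (h2 : x ≤ 2) :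
    Real.sqrt (4 - x ^ 2) = Real.sqrt (2 - x) * Real.sqrt (2 + x) := by
  rw [← Real.sqrt_mul (by linarith)]
  congr 1; ring

lemma scf_div_le {x z : ℝ} (hx1 : -2 ≤ x) (hx2 : x ≤ 2) (hz : 2 ≤ z) :
    scf x / (z - x) ≤ 1 / (π * Real.sqrt (2 - x)) := by
  rcases eq_or_lt_of_le hx2 with rfl | hlt
  · have h : scf (2:ℝ) = 0 := by
      simp [scf, show (4:ℝ) - 2 ^ 2 = 0 by norm_num]
    simp [h]
  · have h2x : 0 < 2 - x := by linarith
    have hzx : 0 < z - x := by linarith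
    have hs2 : Real.sqrt (2 - x) > 0 := Real.sqrt_pos.2 h2x
    have hle : scf x / (z - x) ≤ scf x / (2 - x) := by
      gcongr
      exact scf_nonneg x
    refine hle.trans ?_
    have h4 : Real.sqrt 4 = 2 := by
      rw [show (4:ℝ) = 2 ^ 2 by norm_num, Real.sqrt_sq (by norm_num)]
    have h1 : Real.sqrt (2 + x) ≤ 2 := h4 ▸ Real.sqrt_le_sqrt (by linarith)
    have h2 : Real.sqrt (2 - x) ^ 2 = 2 - x := Real.sq_sqrt h2x.le
    rw [scf, scf_sqrt_factor hx1 hlt.le, div_le_div_iff₀ (by positivity) (by positivity)]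
    have hpi : 0 < π := Real.pi_pos
    have e : Real.sqrt (2-x) * Real.sqrt (2+x) / (2*π) * (π * Real.sqrt (2-x))
        = (Real.sqrt (2-x) ^ 2 * Real.sqrt (2+x)) / 2 := by
      field_simp
    rw [e, h2]
    nlinarith [mul_le_mul_of_nonneg_left h1 h2x.le]

noncomputable def Fsc (x : ℝ) : ℝ := (2 * Real.arcsin (x / 2) - Real.sqrt (4 - x ^ 2)) / (2 * π)

lemma Fsc_cont : Continuous Fsc :=
  ((continuous_const.mul (Real.continuous_arcsin.comp (continuous_id.div_const 2))).sub
    ((continuous_const.sub (continuous_pow 2)).sqrt)).div_const _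

lemma Fsc_sub : Fsc 2 - Fsc (-2) = 1 := by
  have h1 : ((2:ℝ)) / 2 = 1 := by norm_num
  have h2 : ((-2:ℝ)) / 2 = -1 := by norm_num
  have h3 : (4:ℝ) - 2 ^ 2 = 0 := by norm_num
  have h4 : (4:ℝ) - (-2) ^ 2 = 0 := by norm_num
  unfold Fsc
  rw [h1, h2, h3, h4, Real.arcsin_one, Real.arcsin_neg_one, Real.sqrt_zero]
  have := Real.pi_ne_zero
  field_simp
  ring

lemma Fsc_deriv {x : ℝ} (h1 : -2 < x) (h2 : x < 2) :
    HasDerivAt Fsc (scf x / (2 - x)) x := by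
  have hs : 0 < 4 - x ^ 2 := by nlinarith
  have hsq : 0 < Real.sqrt (4 - x ^ 2) := Real.sqrt_pos.2 hs
  have hs2 : Real.sqrt (4 - x ^ 2) ^ 2 = 4 - x ^ 2 := Real.sq_sqrt hs.le
  have hb := (Real.hasDerivAt_sqrt hs.ne').comp x ((hasDerivAt_pow 2 x).const_sub 4)
  have hc := (Real.hasDerivAt_arcsin
      (x := x / 2)
      (by intro h; rw [div_eq_iff (by norm_num : (2:ℝ) ≠ 0)] at h; linarith)
      (by intro h; rw [div_eq_iff (by norm_num : (2:ℝ) ≠ 0)] at h; linarith)).comp x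
      ((hasDerivAt_id x).div_const 2)
  have hF := ((hc.const_mul (2:ℝ)).sub hb).div_const (2 * π)
  have hq : Real.sqrt (1 - (x / 2) ^ 2) = Real.sqrt (4 - x ^ 2) / 2 := by
    have h : (Real.sqrt (4 - x ^ 2) / 2) ^ 2 = 1 - (x / 2) ^ 2 := by
      rw [div_pow, hs2]; ring
    rw [← h]
    exact Real.sqrt_sq (by positivity)
  refine hF.congr_deriv (Eq.symm ?_)
  rw [hq]
  have hpi := Real.pi_ne_zero
  have h2x : (2:ℝ) - x ≠ 0 := by linarith
  rw [scf]
  field_simp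
  linear_combination 2 * hs2

lemma qbound_intInt : IntervalIntegrable (fun x : ℝ => 1 / (π * Real.sqrt (2 - x)))
    volume (-2) 2 := by
  have h0 : IntervalIntegrable (fun t : ℝ => t ^ (-(1:ℝ)/2)) volume 0 4 :=
    intervalIntegral.intervalIntegrable_rpow' (by norm_num)
  have h1 := (h0.comp_sub_left 2).symm
  norm_num at h1
  have h3 := h1.const_mul (1 / π)
  apply h3.congr
  intro x hx
  rw [Set.uIoc_of_le (by norm_num : (-2:ℝ) ≤ 2)] at hx
  have h2x : (0:ℝ) ≤ 2 - x := by linarith [hx.2]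
  beta_reduce
  rw [show -(1/2 : ℝ) = -(1/2 : ℝ) from rfl, Real.rpow_neg h2x, ← Real.sqrt_eq_rpow,
    one_div, one_div, mul_inv]

/-- measurability of `x ↦ scf x / (z - x)` -/
lemma scfG_meas (z : ℝ) : Measurable (fun x : ℝ => scf x / (z - x)) :=
  scf_cont.measurable.div (measurable_const.sub measurable_id)

lemma scfG_integrableOn {z : ℝ} (hz : 2 ≤ z) :
    IntegrableOn (fun x : ℝ => scf x / (z - x)) (Icc (-2) 2) volume := by
  have hb : IntegrableOn (fun x : ℝ => 1 / (π * Real.sqrt (2 - x))) (Icc (-2) 2) volume := by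
    rw [← intervalIntegrable_iff_integrableOn_Icc_of_le (by norm_num : (-2:ℝ) ≤ 2)]
    exact qbound_intInt
  apply Integrable.mono hb ((scfG_meas z).aestronglyMeasurable)
  rw [ae_restrict_iff' measurableSet_Icc]
  apply ae_of_all
  intro x hx
  have h1 : 0 ≤ scf x / (z - x) :=
    div_nonneg (scf_nonneg x) (by linarith [hx.2])
  have h2 : 0 ≤ 1 / (π * Real.sqrt (2 - x)) := by positivity
  rw [Real.norm_of_nonneg h1, Real.norm_of_nonneg h2]
  exact scf_div_le hx.1 hx.2 hz

/-- continuity-based interval integrability when `z > 2`. -/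
lemma scfG_intInt {z a b : ℝ} (hz : 2 < z) (ha : a ≤ 2) (hb : b ≤ 2) :
    IntervalIntegrable (fun x : ℝ => scf x / (z - x)) volume a b := by
  apply ContinuousOn.intervalIntegrable
  apply scf_cont.continuousOn.div (continuousOn_const.sub continuousOn_id)
  intro x hx
  have h1 : x ≤ max a b := hx.2
  have : x ≤ 2 := h1.trans (max_le ha hb)
  intro h; rw [Pi.sub_apply, sub_eq_zero] at h; simp only [id_eq] at h; linarith

lemma integral_scf_two : ∫ x in (-2:ℝ)..2, scf x / (2 - x) = 1 := by
  rw [intervalIntegral.integral_eq_sub_of_hasDeriv_right_of_le (by norm_num)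
    Fsc_cont.continuousOn
    (fun x hx => (Fsc_deriv hx.1 hx.2).hasDerivWithinAt)
    ((intervalIntegrable_iff_integrableOn_Icc_of_le (by norm_num)).2 (scfG_integrableOn le_rfl))]
  exact Fsc_sub

lemma upper_M {z : ℝ} (hz : 2 < z) : ∫ x in (-2:ℝ)..2, scf x / (z - x) ≤ 1 := by
  rw [← Fsc_sub]
  apply intervalIntegral.integral_le_sub_of_hasDeriv_right_of_le (by norm_num)
    Fsc_cont.continuousOn (fun x hx => (Fsc_deriv hx.1 hx.2).hasDerivWithinAt)
    ((intervalIntegrable_iff_integrableOn_Icc_of_le (by norm_num)).1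
      (scfG_intInt hz (by norm_num) (by norm_num)))
  intro x hx
  have h1 := hx.1
  have h2 := hx.2
  have h3 := scf_nonneg x
  gcongr <;> linarith

lemma tail_bound {a z : ℝ} (ha : -2 ≤ a) (ha2 : a ≤ 2) (hz : 2 < z) :
    ∫ x in a..2, scf x / (z - x) ≤ 2 / π * Real.sqrt (2 - a) := by
  have hgcont : ContinuousOn (fun x : ℝ => -(2 / π) * Real.sqrt (2 - x)) (Icc a 2) :=
    Continuous.continuousOn (by continuity)
  have hderiv : ∀ x ∈ Ioo a 2, HasDerivWithinAt (fun y : ℝ => -(2 / π) * Real.sqrt (2 - y))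
      (1 / (π * Real.sqrt (2 - x))) (Ioi x) x := by
    intro x hx
    have h2x : 0 < 2 - x := by linarith [hx.2]
    have hb := (Real.hasDerivAt_sqrt h2x.ne').comp x ((hasDerivAt_id x).const_sub 2)
    have hmul := hb.const_mul (-(2 / π))
    have : HasDerivAt (fun y : ℝ => -(2 / π) * Real.sqrt (2 - y))
        (1 / (π * Real.sqrt (2 - x))) x := by
      refine hmul.congr_deriv (Eq.symm ?_)
      have hsq : Real.sqrt (2 - x) ≠ 0 := (Real.sqrt_pos.2 h2x).ne'
      have hpi := Real.pi_ne_zero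
      field_simp
    exact this.hasDerivWithinAt
  have hint := (intervalIntegrable_iff_integrableOn_Icc_of_le ha2).1 (scfG_intInt hz ha2 le_rfl)
  have hle : ∀ x ∈ Ioo a 2, scf x / (z - x) ≤ 1 / (π * Real.sqrt (2 - x)) :=
    fun x hx => scf_div_le (by linarith [hx.1]) hx.2.le hz.le
  have key := intervalIntegral.integral_le_sub_of_hasDeriv_right_of_le ha2 hgcont hderiv hint hle
  calc ∫ x in a..2, scf x / (z - x) ≤ _ := key
  _ = 2 / π * Real.sqrt (2 - a) := by
      rw [show (2:ℝ) - 2 = 0 by norm_num, Real.sqrt_zero]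
      ring

lemma z_ge_two {β : ℝ} (hβ : 1 < β) (K : ℕ) : (2:ℝ) ≤ 2 + 1 / ((β - 1) * K) := by
  have : (0:ℝ) ≤ 1 / ((β - 1) * K) := by
    apply one_div_nonneg.2
    have : (0:ℝ) ≤ (K:ℝ) := Nat.cast_nonneg K
    nlinarith
  linarith

lemma z_gt_two {β : ℝ} (hβ : 1 < β) {K : ℕ} (hK : 1 ≤ K) : (2:ℝ) < 2 + 1 / ((β - 1) * K) := by
  have hK' : (1:ℝ) ≤ (K:ℝ) := by exact_mod_cast hK
  have : (0:ℝ) < 1 / ((β - 1) * K) := by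
    apply one_div_pos.2
    nlinarith
  linarith

lemma z_tendsto {β : ℝ} (hβ : 1 < β) :
    Tendsto (fun K : ℕ => 2 + 1 / ((β - 1) * K)) atTop (nhds 2) := by
  have h1 : Tendsto (fun K : ℕ => 1 / ((β - 1) * K)) atTop (nhds 0) := by
    have : (fun K : ℕ => 1 / ((β - 1) * K)) = fun K : ℕ => (1 / (β - 1)) * (1 / K) := by
      funext K; field_simp
    rw [this]
    simpa using tendsto_one_div_atTop_nhds_zero_nat.const_mul (1 / (β - 1))
  simpa using tendsto_const_nhds.add h1

lemma M_tendsto {β : ℝ} (hβ : 1 < β) :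
    Tendsto (fun K : ℕ => ∫ x in (-2:ℝ)..2, scf x / ((2 + 1 / ((β - 1) * K)) - x))
      atTop (nhds 1) := by
  have hIoo : IntegrableOn (fun x : ℝ => scf x / (2 - x)) (Ioo (-2:ℝ) 2) volume :=
    (scfG_integrableOn le_rfl).mono_set Ioo_subset_Icc_self
  have hval : ∫ x in Ioo (-2:ℝ) 2, scf x / (2 - x) = 1 := by
    rw [← integral_Ioc_eq_integral_Ioo, ← intervalIntegral.integral_of_le (by norm_num : (-2:ℝ) ≤ 2)]
    exact integral_scf_two
  have key : Tendsto (fun K : ℕ => ∫ x in Ioo (-2:ℝ) 2, scf x / ((2 + 1 / ((β - 1) * K)) - x))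
      atTop (nhds (∫ x in Ioo (-2:ℝ) 2, scf x / (2 - x))) := by
    apply MeasureTheory.tendsto_integral_of_dominated_convergence
      (fun x => scf x / (2 - x))
      (fun K => ((scfG_meas _).aestronglyMeasurable).restrict)
      hIoo
    · intro K
      rw [ae_restrict_iff' measurableSet_Ioo]
      apply ae_of_all
      intro x hx
      have h2x : 0 < 2 - x := by linarith [hx.2]
      have hzK := z_ge_two hβ K
      have h0 : 0 ≤ scf x / ((2 + 1 / ((β - 1) * K)) - x) :=
        div_nonneg (scf_nonneg x) (by linarith)
      rw [Real.norm_of_nonneg h0]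
      gcongr
      exact scf_nonneg x
    · rw [ae_restrict_iff' measurableSet_Ioo]
      apply ae_of_all
      intro x hx
      have h2x : (2:ℝ) - x ≠ 0 := by linarith [hx.2]
      have hd : Tendsto (fun K : ℕ => (2 + 1 / ((β - 1) * K)) - x) atTop (nhds (2 - x)) :=
        (z_tendsto hβ).sub tendsto_const_nhds
      exact tendsto_const_nhds.div hd h2x
  rw [hval] at key
  apply key.congr
  intro K
  rw [← integral_Ioc_eq_integral_Ioo, ← intervalIntegral.integral_of_le (by norm_num : (-2:ℝ) ≤ 2)]

lemma step_upper {z a b : ℝ} (hz : 2 < z) (hab : a ≤ b) (hb : b ≤ 2) :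
    ∫ x in a..b, scf x / (z - x) ≤ (∫ x in a..b, scf x) * (1 / (z - b)) := by
  rw [← intervalIntegral.integral_mul_const]
  apply intervalIntegral.integral_mono_on hab
    (scfG_intInt hz (hab.trans hb) hb) ((scf_cont.intervalIntegrable a b).mul_const _)
  intro x hx
  rw [div_eq_mul_one_div]
  apply mul_le_mul_of_nonneg_left _ (scf_nonneg x)
  apply one_div_le_one_div_of_le (by linarith) (by linarith [hx.2])

lemma step_lower {z a b : ℝ} (hz : 2 < z) (hab : a ≤ b) (hb : b ≤ 2) (ha : -2 ≤ a) :
    (∫ x in a..b, scf x) * (1 / (z - a)) ≤ ∫ x in a..b, scf x / (z - x) := by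
  rw [← intervalIntegral.integral_mul_const]
  apply intervalIntegral.integral_mono_on hab
    ((scf_cont.intervalIntegrable a b).mul_const _) (scfG_intInt hz (hab.trans hb) hb)
  intro x hx
  rw [div_eq_mul_one_div (scf x) (z - x)]
  apply mul_le_mul_of_nonneg_left _ (scf_nonneg x)
  apply one_div_le_one_div_of_le (by linarith [hx.2]) (by linarith [hx.1])

lemma key_bounds (z : ℝ) (hz : 2 < z) (K : ℕ) (hK : 2 ≤ K) (lamN : ℕ → ℝ)
    (h0 : lamN 0 = 2) (hKK : lamN K = -2)
    (hm : ∀ ⦃i j : ℕ⦄, i ≤ j → j ≤ K → lamN j ≤ lamN i)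
    (hq : ∀ j, j < K → ∫ x in (lamN (j+1))..(lamN j), scf x = 1 / K) :
    ((∫ x in (-2:ℝ)..(lamN 1), scf x / (z - x))
      ≤ ∑ i ∈ Finset.range (K-1), (1 / K) * (1 / (z - lamN (i+1))))
    ∧ ((∑ i ∈ Finset.range (K-1), (1 / K) * (1 / (z - lamN (i+1))))
      ≤ ∫ x in (-2:ℝ)..2, scf x / (z - x)) := by
  have hbd : ∀ j, j ≤ K → -2 ≤ lamN j ∧ lamN j ≤ 2 := by
    intro j hj
    constructor
    · rw [← hKK]; exact hm hj le_rfl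
    · rw [← h0]; exact hm (Nat.zero_le j) hj
  have hreflect : ∑ i ∈ Finset.range (K-1), (1 / (K:ℝ)) * (1 / (z - lamN (i+1)))
      = ∑ i ∈ Finset.range (K-1), (1 / (K:ℝ)) * (1 / (z - lamN (K - 1 - i))) := by
    rw [← Finset.sum_range_reflect]
    apply Finset.sum_congr rfl
    intro i hi
    rw [Finset.mem_range] at hi
    rw [show K - 1 - 1 - i + 1 = K - 1 - i from by omega]
  constructor
  · -- lower bound
    have hint : ∀ i, i < K - 1 → IntervalIntegrable (fun x => scf x / (z - x)) volume
        (lamN (K - i)) (lamN (K - (i+1))) := by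
      intro i hi
      exact scfG_intInt hz (hbd _ (by omega)).2 (hbd _ (by omega)).2
    have tele : ∑ i ∈ Finset.range (K-1), ∫ x in (lamN (K - i))..(lamN (K - (i+1))), scf x / (z - x)
        = ∫ x in (lamN (K - 0))..(lamN (K - (K-1))), scf x / (z - x) :=
      intervalIntegral.sum_integral_adjacent_intervals (a := fun i => lamN (K - i)) hint
    rw [show K - 0 = K from rfl, show K - (K-1) = 1 from by omega, hKK] at tele
    rw [← tele]
    have hterm : ∀ i ∈ Finset.range (K - 1),
        (∫ x in (lamN (K - i))..(lamN (K - (i+1))), scf x / (z - x))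
          ≤ (1 / K) * (1 / (z - lamN (K - 1 - i))) := by
      intro i hi
      rw [Finset.mem_range] at hi
      have hj : K - 1 - i < K := by omega
      rw [show K - i = (K - 1 - i) + 1 from by omega, show K - (i+1) = K - 1 - i from by omega]
      calc ∫ x in (lamN ((K-1-i)+1))..(lamN (K-1-i)), scf x / (z - x)
          ≤ (∫ x in (lamN ((K-1-i)+1))..(lamN (K-1-i)), scf x) * (1 / (z - lamN (K-1-i))) :=
            step_upper hz (hm (by omega) (by omega)) (hbd _ (by omega)).2
        _ = (1 / K) * (1 / (z - lamN (K-1-i))) := by rw [hq _ hj]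
    calc ∑ i ∈ Finset.range (K-1), ∫ x in (lamN (K - i))..(lamN (K - (i+1))), scf x / (z - x)
        ≤ ∑ i ∈ Finset.range (K-1), (1 / (K:ℝ)) * (1 / (z - lamN (K - 1 - i))) :=
          Finset.sum_le_sum hterm
      _ = ∑ i ∈ Finset.range (K-1), (1 / (K:ℝ)) * (1 / (z - lamN (i+1))) := hreflect.symm
  · -- upper bound
    have hint : ∀ i, i < K - 1 → IntervalIntegrable (fun x => scf x / (z - x)) volume
        (lamN (K - 1 - i)) (lamN (K - 1 - (i+1))) := by
      intro i hi
      exact scfG_intInt hz (hbd _ (by omega)).2 (hbd _ (by omega)).2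
    have tele : ∑ i ∈ Finset.range (K-1), ∫ x in (lamN (K - 1 - i))..(lamN (K - 1 - (i+1))), scf x / (z - x)
        = ∫ x in (lamN (K - 1 - 0))..(lamN (K - 1 - (K-1))), scf x / (z - x) :=
      intervalIntegral.sum_integral_adjacent_intervals (a := fun i => lamN (K - 1 - i)) hint
    rw [show K - 1 - 0 = K - 1 from rfl, show K - 1 - (K-1) = 0 from by omega, h0] at tele
    have hterm : ∀ i ∈ Finset.range (K - 1),
        (1 / (K:ℝ)) * (1 / (z - lamN (K - 1 - i)))
          ≤ ∫ x in (lamN (K - 1 - i))..(lamN (K - 1 - (i+1))), scf x / (z - x) := by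
      intro i hi
      rw [Finset.mem_range] at hi
      have hj : K - 2 - i < K := by omega
      rw [show K - 1 - i = (K - 2 - i) + 1 from by omega,
        show K - 1 - (i+1) = K - 2 - i from by omega]
      have hsl := step_lower hz (hm (by omega : K - 2 - i ≤ (K - 2 - i) + 1) (by omega))
        (hbd _ (by omega)).2 (hbd _ (by omega)).1
      rw [hq _ hj] at hsl
      exact hsl
    have hsum : ∑ i ∈ Finset.range (K-1), (1 / (K:ℝ)) * (1 / (z - lamN (K - 1 - i)))
        ≤ ∫ x in (lamN (K-1))..2, scf x / (z - x) := by
      rw [← tele]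
      exact Finset.sum_le_sum hterm
    rw [hreflect]
    apply hsum.trans
    have hsplit := intervalIntegral.integral_add_adjacent_intervals
      (scfG_intInt hz (by norm_num) (hbd (K-1) (by omega)).2 :
        IntervalIntegrable (fun x => scf x / (z - x)) volume (-2) (lamN (K-1)))
      (scfG_intInt hz (hbd (K-1) (by omega)).2 (by norm_num) :
        IntervalIntegrable (fun x => scf x / (z - x)) volume (lamN (K-1)) 2)
    rw [← hsplit]
    have hnn : 0 ≤ ∫ x in (-2:ℝ)..(lamN (K-1)), scf x / (z - x) := by
      apply intervalIntegral.integral_nonneg (hbd (K-1) (by omega)).1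
      intro x hx
      exact div_nonneg (scf_nonneg x) (by linarith [hx.2, (hbd (K-1) (by omega : K-1 ≤ K)).2])
    linarith

lemma sum_shift (K : ℕ) (hK : 1 ≤ K) (g : ℕ → ℝ) :
    ∑ j ∈ Finset.range K, g j = g 0 + ∑ i ∈ Finset.range (K-1), g (i+1) := by
  obtain ⟨n, rfl⟩ : ∃ n, K = n + 1 := ⟨K - 1, by omega⟩
  rw [Finset.sum_range_succ']
  simp [add_comm]

lemma fin_filter_sum (K : ℕ) (hK : 2 ≤ K) (g : ℕ → ℝ) :
    ∑ i ∈ Finset.univ.filter (fun i : Fin K => 0 < (i : ℕ)), g ↑i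
      = ∑ i ∈ Finset.range (K-1), g (i+1) := by
  haveI : NeZero K := ⟨by omega⟩
  have h1 := Finset.sum_filter_add_sum_filter_not Finset.univ
    (fun i : Fin K => 0 < (i:ℕ)) (fun i => g ↑i)
  have h2 : Finset.univ.filter (fun i : Fin K => ¬ 0 < (i:ℕ)) = {0} := by
    ext i
    simp only [Finset.mem_filter, Finset.mem_univ, true_and, Finset.mem_singleton, not_lt, Nat.le_zero, Fin.ext_iff, Fin.val_zero]
  rw [h2] at h1
  simp only [Finset.sum_singleton, Fin.val_zero] at h1
  rw [Fin.sum_univ_eq_sum_range (fun j => g j) K, sum_shift K (by omega)] at h1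
  linarith

lemma ell_tendsto (ell : ℕ → ℝ) (hle : ∀ K, 2 ≤ K → ell K ≤ 2)
    (hq : ∀ K, 2 ≤ K → ∫ x in (ell K)..2, scf x = 1 / K) :
    Tendsto ell atTop (nhds 2) := by
  rw [tendsto_order]
  constructor
  · intro a ha
    set ε := min (2 - a) 2 with hεdef
    have hε : 0 < ε := lt_min (by linarith) (by norm_num)
    have hε2 : ε ≤ 2 := min_le_right _ _
    have h2ε : a ≤ 2 - ε := by
      have := min_le_left (2 - a) 2
      simp only [← hεdef] at this
      linarith
    have hc : 0 < ∫ x in (2-ε)..2, scf x := by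
      apply intervalIntegral.intervalIntegral_pos_of_pos_on
        (scf_cont.intervalIntegrable (μ := volume) _ _)
        (fun x hx => scf_pos (by linarith [hx.1]) hx.2)
        (by linarith)
    have hev1 : ∀ᶠ K : ℕ in atTop, 1 / (K:ℝ) < ∫ x in (2-ε)..2, scf x :=
      tendsto_one_div_atTop_nhds_zero_nat.eventually_lt_const hc
    filter_upwards [hev1, eventually_ge_atTop 2] with K h1 h2
    by_contra hcon
    push_neg at hcon
    have hsplit := intervalIntegral.integral_add_adjacent_intervals
      (scf_cont.intervalIntegrable (μ := volume) (ell K) (2 - ε)) (scf_cont.intervalIntegrable (μ := volume) (2 - ε) 2)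
    have hnn : 0 ≤ ∫ x in (ell K)..(2-ε), scf x :=
      intervalIntegral.integral_nonneg (by linarith) (fun x _ => scf_nonneg x)
    have : (∫ x in (2-ε)..2, scf x) ≤ ∫ x in (ell K)..2, scf x := by
      rw [← hsplit]; linarith
    rw [hq K h2] at this
    linarith
  · intro b hb
    filter_upwards [eventually_ge_atTop 2] with K h2
    exact lt_of_le_of_lt (hle K h2) hb

lemma measure_Icc_scf {a b : ℝ} (ha : -2 ≤ a) (hb : b ≤ 2) (hab : a ≤ b) :
    semicircleLaw (Set.Icc a b) = ENNReal.ofReal (∫ x in a..b, scf x) := by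
  rw [semicircleLaw, withDensity_apply _ measurableSet_Icc]
  have h1 : ∀ᵐ x ∂(volume.restrict (Icc a b)),
      ENNReal.ofReal (if |x| ≤ 2 then Real.sqrt (4 - x ^ 2) / (2 * π) else 0)
        = ENNReal.ofReal (scf x) := by
    rw [ae_restrict_iff' measurableSet_Icc]
    apply ae_of_all
    intro x hx
    rw [if_pos (abs_le.2 ⟨by linarith [hx.1], by linarith [hx.2]⟩)]
    rfl
  rw [lintegral_congr_ae h1]
  rw [← ofReal_integral_eq_lintegral_ofReal (scf_cont.integrableOn_Icc)
    (ae_of_all _ scf_nonneg)]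
  congr 1
  rw [integral_Icc_eq_integral_Ioc, ← intervalIntegral.integral_of_le hab]


/-- **Low-temperature solution of the Lagrange-multiplier equation.**
For each `K ≥ 2` let `2 = λ̃ K 0 ≥ λ̃ K 1 ≥ … ≥ λ̃ K (K-1) ≥ λ̃ K K = −2` be points
splitting the mass of the semicircular law into `K` equal parts.  Fix `β > 1` and put
`z_K = 2 + 1/((β−1)K)`.  Then `(1/K) ∑_{1 ≤ i < K} 1/(z_K − λ̃ K i) → 1` as `K → ∞`;
consequently (since `(1/K) · 1/(z_K − λ̃ K 0) = β − 1`) the full sum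
`(1/K) ∑_{i<K} 1/(z_K − λ̃ K i) → β`. -/
theorem quantile_sum_low_temperature
    (lam : (K : ℕ) → Fin (K + 1) → ℝ)
    (hfirst : ∀ K, 2 ≤ K → lam K 0 = 2)
    (hlast : ∀ K, 2 ≤ K → lam K (Fin.last K) = -2)
    (hmono : ∀ K, 2 ≤ K → Antitone (lam K))
    (hquant : ∀ K, 2 ≤ K → ∀ j : Fin K,
      semicircleLaw (Set.Icc (lam K j.succ) (lam K j.castSucc)) = (K : ENNReal)⁻¹)
    (β : ℝ) (hβ : 1 < β) :
    Tendsto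
      (fun K : ℕ => (1 / (K : ℝ)) * ∑ i ∈ Finset.univ.filter (fun i : Fin K => 0 < (i : ℕ)),
        1 / ((2 + 1 / ((β - 1) * K)) - lam K i.castSucc))
      atTop (nhds 1)
    ∧ Tendsto
      (fun K : ℕ => (1 / (K : ℝ)) * ∑ i : Fin K,
        1 / ((2 + 1 / ((β - 1) * K)) - lam K i.castSucc))
      atTop (nhds β) := by
  -- ℕ-indexed version of the quantile points
  set lamN : ℕ → ℕ → ℝ := fun K j => lam K ⟨min j K, by omega⟩ with hlamN
  have hlam : ∀ K : ℕ, ∀ j : ℕ, ∀ hj : j ≤ K,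
      lamN K j = lam K ⟨j, by omega⟩ := by
    intro K j hj
    simp only [hlamN]
    congr 1
    exact Fin.ext (by simpa using Nat.min_eq_left hj)
  -- basic properties for K ≥ 2
  have h0 : ∀ K : ℕ, 2 ≤ K → lamN K 0 = 2 := by
    intro K hK
    rw [hlam K 0 (by omega)]
    exact hfirst K hK
  have hKK : ∀ K : ℕ, 2 ≤ K → lamN K K = -2 := by
    intro K hK
    rw [hlam K K le_rfl]
    exact hlast K hK
  have hm : ∀ K : ℕ, 2 ≤ K → ∀ ⦃i j : ℕ⦄, i ≤ j → j ≤ K → lamN K j ≤ lamN K i := by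
    intro K hK i j hij hj
    rw [hlam K i (hij.trans hj), hlam K j hj]
    exact hmono K hK (by simpa [Fin.mk_le_mk] using hij)
  have hbounds : ∀ K : ℕ, 2 ≤ K → ∀ j : ℕ, j ≤ K → -2 ≤ lamN K j ∧ lamN K j ≤ 2 := by
    intro K hK j hj
    constructor
    · rw [← hKK K hK]; exact hm K hK hj le_rfl
    · rw [← h0 K hK]; exact hm K hK (Nat.zero_le j) hj
  -- real-valued quantile identity
  have hq : ∀ K : ℕ, 2 ≤ K → ∀ j : ℕ, j < K →
      ∫ x in (lamN K (j+1))..(lamN K j), scf x = 1 / K := by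
    intro K hK j hj
    have hmea := hquant K hK ⟨j, hj⟩
    have e1 : lam K (Fin.succ ⟨j, hj⟩) = lamN K (j+1) := by
      rw [hlam K (j+1) (by omega)]
      rfl
    have e2 : lam K (Fin.castSucc ⟨j, hj⟩) = lamN K j := by
      rw [hlam K j (by omega)]
      rfl
    rw [e1, e2] at hmea
    have hord : lamN K (j+1) ≤ lamN K j := hm K hK (by omega) (by omega)
    rw [measure_Icc_scf (hbounds K hK (j+1) (by omega)).1 (hbounds K hK j (by omega)).2 hord]
      at hmea
    have hKpos : (0:ℝ) < (K:ℝ) := by exact_mod_cast (by omega : 0 < K)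
    have hcast : ENNReal.ofReal (1/(K:ℝ)) = (K : ENNReal)⁻¹ := by
      rw [one_div, ENNReal.ofReal_inv_of_pos hKpos, ENNReal.ofReal_natCast]
    rw [← hcast] at hmea
    exact (ENNReal.ofReal_eq_ofReal_iff
      (intervalIntegral.integral_nonneg hord (fun x _ => scf_nonneg x))
      (by positivity)).1 hmea
  -- the (1 - 1/K)-quantile tends to 2
  have hell : Tendsto (fun K : ℕ => lamN K 1) atTop (nhds 2) := by
    apply ell_tendsto
    · intro K hK
      exact (hbounds K hK 1 (by omega)).2
    · intro K hK
      have := hq K hK 0 (by omega)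
      rwa [h0 K hK] at this
  have htail0 : Tendsto (fun K : ℕ => 2 / π * Real.sqrt (2 - lamN K 1)) atTop (nhds 0) := by
    have h1 : Tendsto (fun K : ℕ => 2 - lamN K 1) atTop (nhds (2 - 2)) :=
      tendsto_const_nhds.sub hell
    rw [show (2:ℝ) - 2 = 0 by norm_num] at h1
    have h2 : Tendsto (fun K : ℕ => Real.sqrt (2 - lamN K 1)) atTop (nhds 0) := by
      have := (Real.continuous_sqrt.tendsto 0).comp h1
      simpa [Function.comp_def] using this
    simpa using h2.const_mul (2 / π)
  -- the main squeezed sequence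
  have hlowlim : Tendsto (fun K : ℕ =>
      (∫ x in (-2:ℝ)..2, scf x / ((2 + 1 / ((β - 1) * K)) - x))
        - 2 / π * Real.sqrt (2 - lamN K 1)) atTop (nhds 1) := by
    have := (M_tendsto hβ).sub htail0
    simpa using this
  -- identification of the target sum for K ≥ 2
  have hSeq : ∀ K : ℕ, 2 ≤ K →
      (1 / (K : ℝ)) * ∑ i ∈ Finset.univ.filter (fun i : Fin K => 0 < (i : ℕ)),
          1 / ((2 + 1 / ((β - 1) * K)) - lam K i.castSucc)
        = ∑ i ∈ Finset.range (K-1),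
            (1 / (K:ℝ)) * (1 / ((2 + 1 / ((β - 1) * K)) - lamN K (i+1))) := by
    intro K hK
    have hc : ∀ i : Fin K, 1 / ((2 + 1 / ((β - 1) * K)) - lam K i.castSucc)
        = 1 / ((2 + 1 / ((β - 1) * K)) - lamN K (i : ℕ)) := by
      intro i
      rw [hlam K (i : ℕ) (le_of_lt i.isLt)]
      rfl
    rw [Finset.sum_congr rfl (fun i _ => hc i),
      fin_filter_sum K hK (fun j => 1 / ((2 + 1 / ((β - 1) * K)) - lamN K j)),
      Finset.mul_sum]
  -- bounds for K ≥ 2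
  have hbnd : ∀ K : ℕ, 2 ≤ K →
      ((∫ x in (-2:ℝ)..2, scf x / ((2 + 1 / ((β - 1) * K)) - x))
          - 2 / π * Real.sqrt (2 - lamN K 1)
        ≤ (1 / (K : ℝ)) * ∑ i ∈ Finset.univ.filter (fun i : Fin K => 0 < (i : ℕ)),
            1 / ((2 + 1 / ((β - 1) * K)) - lam K i.castSucc))
      ∧ ((1 / (K : ℝ)) * ∑ i ∈ Finset.univ.filter (fun i : Fin K => 0 < (i : ℕ)),
            1 / ((2 + 1 / ((β - 1) * K)) - lam K i.castSucc) ≤ 1) := by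
    intro K hK
    have hz := z_gt_two hβ (by omega : 1 ≤ K)
    have kb := key_bounds _ hz K hK (lamN K) (h0 K hK) (hKK K hK) (hm K hK) (hq K hK)
    rw [hSeq K hK]
    constructor
    · refine le_trans ?_ kb.1
      have hb1 := hbounds K hK 1 (by omega)
      have hsplit := intervalIntegral.integral_add_adjacent_intervals
        (scfG_intInt hz (by norm_num) hb1.2 :
          IntervalIntegrable _ volume (-2) (lamN K 1))
        (scfG_intInt hz hb1.2 (by norm_num) :
          IntervalIntegrable _ volume (lamN K 1) 2)
      have htl := tail_bound hb1.1 hb1.2 hz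
      have : (∫ x in (-2:ℝ)..2, scf x / ((2 + 1 / ((β - 1) * K)) - x))
          = (∫ x in (-2:ℝ)..(lamN K 1), scf x / ((2 + 1 / ((β - 1) * K)) - x))
            + ∫ x in (lamN K 1)..2, scf x / ((2 + 1 / ((β - 1) * K)) - x) := hsplit.symm
      linarith
    · exact kb.2.trans (upper_M hz)
  -- first limit
  have hmain1 : Tendsto
      (fun K : ℕ => (1 / (K : ℝ)) * ∑ i ∈ Finset.univ.filter (fun i : Fin K => 0 < (i : ℕ)),
        1 / ((2 + 1 / ((β - 1) * K)) - lam K i.castSucc)) atTop (nhds 1) := by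
    apply tendsto_of_tendsto_of_tendsto_of_le_of_le' hlowlim tendsto_const_nhds
    · filter_upwards [eventually_ge_atTop 2] with K hK
      exact (hbnd K hK).1
    · filter_upwards [eventually_ge_atTop 2] with K hK
      exact (hbnd K hK).2
  refine ⟨hmain1, ?_⟩
  -- second limit
  have heq2 : ∀ᶠ K : ℕ in atTop,
      (1 / (K : ℝ)) * ∑ i : Fin K, 1 / ((2 + 1 / ((β - 1) * K)) - lam K i.castSucc)
        = ((1 / (K : ℝ)) * ∑ i ∈ Finset.univ.filter (fun i : Fin K => 0 < (i : ℕ)),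
            1 / ((2 + 1 / ((β - 1) * K)) - lam K i.castSucc)) + (β - 1) := by
    filter_upwards [eventually_ge_atTop 2] with K hK
    haveI : NeZero K := ⟨by omega⟩
    have hsplit := Finset.sum_filter_add_sum_filter_not Finset.univ
      (fun i : Fin K => 0 < (i:ℕ))
      (fun i => 1 / ((2 + 1 / ((β - 1) * K)) - lam K i.castSucc))
    have hzero : Finset.univ.filter (fun i : Fin K => ¬ 0 < (i:ℕ)) = {0} := by
      ext i
      simp only [Finset.mem_filter, Finset.mem_univ, true_and, Finset.mem_singleton, not_lt, Nat.le_zero, Fin.ext_iff, Fin.val_zero]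
    rw [hzero] at hsplit
    simp only [Finset.sum_singleton] at hsplit
    have hc0 : lam K (Fin.castSucc (0 : Fin K)) = 2 := by
      rw [show Fin.castSucc (0 : Fin K) = (0 : Fin (K+1)) from Fin.ext rfl]
      exact hfirst K hK
    have hKpos : (0:ℝ) < (K:ℝ) := by exact_mod_cast (by omega : 0 < K)
    have hβ1 : β - 1 ≠ 0 := by intro h; rw [sub_eq_zero] at h; linarith
    have hterm : (1 / (K : ℝ)) * (1 / ((2 + 1 / ((β - 1) * K)) - lam K (Fin.castSucc (0 : Fin K))))
        = β - 1 := by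
      rw [hc0]
      rw [show (2 + 1 / ((β - 1) * (K:ℝ))) - 2 = 1 / ((β - 1) * K) by ring]
      rw [one_div_one_div]
      field_simp
    calc (1 / (K : ℝ)) * ∑ i : Fin K, 1 / ((2 + 1 / ((β - 1) * K)) - lam K i.castSucc)
        = (1 / (K : ℝ)) * (∑ i ∈ Finset.univ.filter (fun i : Fin K => 0 < (i:ℕ)),
            1 / ((2 + 1 / ((β - 1) * K)) - lam K i.castSucc)
          + 1 / ((2 + 1 / ((β - 1) * K)) - lam K (Fin.castSucc (0 : Fin K)))) := by
          rw [hsplit]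
      _ = _ := by
          rw [mul_add, hterm]
  have h2 : Tendsto
      (fun K : ℕ => ((1 / (K : ℝ)) * ∑ i ∈ Finset.univ.filter (fun i : Fin K => 0 < (i : ℕ)),
          1 / ((2 + 1 / ((β - 1) * K)) - lam K i.castSucc)) + (β - 1)) atTop (nhds (1 + (β - 1))) :=
    hmain1.add tendsto_const_nhds
  have : (1 : ℝ) + (β - 1) = β := by ring
  rw [this] at h2
  exact h2.congr' (by filter_upwards [heq2] with K h using h.symm)
end
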